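/- arXiv:1207.6674 — 3 statements merged into one kernel-verified Lean document; each statement's English description precedes it below -/
import Mathlib

section
/- Let E be a compact subset of ℝ and {A₁,…,A_k} a family of compact subsets of E such that each Aᵢ is E-separate (d(Aᵢ, E∖Aᵢ) > 0), CH(Aᵢ) ∩ E = Aᵢ for all i, and the convex hulls CH(Aᵢ) are pairwise disjoint. Then there exists a unique family 𝒮 of compact subsets of E of minimal cardinality such that: ⋃_{B∈𝒮} B = E; CH(B) ∩ CH(B') = ∅ for distinct B,B' ∈ 𝒮; and Aᵢ ∈ 𝒮 for all i. Moreover it satisfies the containing property: if B ⊆ E and CH(B) ∩ ⋃ᵢAᵢ = ∅, then there is a unique F ∈ 𝒮 with B ⊆ F. -/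
noncomputable section

open Set Metric MeasureTheory

/-- Distance between two sets. -/
def setDist {X : Type*} [MetricSpace X] (A B : Set X) : ℝ := sInf (Set.image2 dist A B)

/-- Lipschitz equivalence of two sets: a bi-Lipschitz bijection between them. -/
def LipEquivOn {X Y : Type*} [MetricSpace X] [MetricSpace Y] (E : Set X) (F : Set Y) : Prop :=
  ∃ (f : X → Y) (c c' : ℝ), 0 < c ∧ c ≤ c' ∧ Set.BijOn f E F ∧
    ∀ x ∈ E, ∀ y ∈ E, c * dist x y ≤ dist (f x) (f y) ∧ dist (f x) (f y) ≤ c' * dist x y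

/-- The affine contraction `x ↦ ρ i * x + t i`. -/
def affMap (r t : ℕ → ℝ) (i : ℕ) (x : ℝ) : ℝ := r i * x + t i

/-- Composition of the affine maps along a word (first letter outermost). -/
def affWord (r t : ℕ → ℝ) : List ℕ → ℝ → ℝ
  | [] => id
  | i :: w => affMap r t i ∘ affWord r t w

/-- Cylinder of a general IFS for a word over `Fin n`. -/
def cylW {X : Type*} {n : ℕ} (Ψ : Fin n → X → X) (F : Set X) (w : List (Fin n)) : Set X :=
  (w.foldr (fun i g => Ψ i ∘ g) id) '' F

/-- A (separable) contraction vector `(ρ 0, …, ρ (n-1))` in `ℝ`. -/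
structure ContractionVec (n : ℕ) (ρ : ℕ → ℝ) : Prop where
  three_le : 3 ≤ n
  pos : ∀ i, i < n → 0 < ρ i
  lt_one : ∀ i, i < n → ρ i < 1
  sum_lt : (∑ i ∈ Finset.range n, ρ i) < 1

/-- The touching IFS of the standing setup, together with its attractor `T`. -/
structure TouchingIFS (n : ℕ) (ρ : ℕ → ℝ) where
  t : ℕ → ℝ
  T : Set ℝ
  order : ∀ i, i + 1 < n → affMap ρ t i 1 ≤ affMap ρ t (i + 1) 0
  left0 : affMap ρ t 0 0 = 0
  right1 : affMap ρ t (n - 1) 1 = 1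
  touch_ex : ∃ i, i + 1 < n ∧ affMap ρ t i 1 = affMap ρ t (i + 1) 0
  compactT : IsCompact T
  nonemptyT : T.Nonempty
  invT : T = ⋃ i ∈ Finset.range n, affMap ρ t i '' T

/-- The dust-like, equally spaced IFS of the standing setup, with attractor `D`. -/
structure DustIFS (n : ℕ) (ρ : ℕ → ℝ) where
  d : ℕ → ℝ
  D : Set ℝ
  left0 : affMap ρ d 0 0 = 0
  right1 : affMap ρ d (n - 1) 1 = 1
  equal_gap : ∀ i, i + 1 < n →
    affMap ρ d (i + 1) 0 - affMap ρ d i 1 = (1 - ∑ j ∈ Finset.range n, ρ j) / (n - 1)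
  compactD : IsCompact D
  nonemptyD : D.Nonempty
  invD : D = ⋃ i ∈ Finset.range n, affMap ρ d i '' D

variable {n : ℕ} {ρ : ℕ → ℝ}

/-- Cylinder `T_w`. -/
def TouchingIFS.cyl (S : TouchingIFS n ρ) (w : List ℕ) : Set ℝ := affWord ρ S.t w '' S.T

/-- `i` is a (left) touching letter. -/
def TouchingIFS.touch (S : TouchingIFS n ρ) (i : ℕ) : Prop :=
  i + 1 < n ∧ affMap ρ S.t i 1 = affMap ρ S.t (i + 1) 0

/-- Left touching patch `L_k(T_w)` (with `α` the initial touching run length). -/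
def TouchingIFS.patchL (S : TouchingIFS n ρ) (α : ℕ) (w : List ℕ) (k : ℕ) : Set ℝ :=
  ⋃ j ∈ Finset.range α, S.cyl (w ++ List.replicate k 0 ++ [j])

/-- Right touching patch `R_k(T_w)` (with `β` the final touching run length). -/
def TouchingIFS.patchR (S : TouchingIFS n ρ) (β : ℕ) (w : List ℕ) (k : ℕ) : Set ℝ :=
  ⋃ j ∈ Finset.Ico (n - β) n, S.cyl (w ++ List.replicate k (n - 1) ++ [j])

/-- `α` is the number of successive touching intervals at the beginning. -/
def TouchingIFS.alphaRun (S : TouchingIFS n ρ) (α : ℕ) : Prop :=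
  1 ≤ α ∧ α < n ∧ (∀ i, i + 1 < α → S.touch i) ∧ ¬ S.touch (α - 1)

/-- `β` is the number of successive touching intervals at the end. -/
def TouchingIFS.betaRun (S : TouchingIFS n ρ) (β : ℕ) : Prop :=
  1 ≤ β ∧ β < n ∧ (∀ i, n - β ≤ i → i + 1 < n → S.touch i) ∧ ¬ S.touch (n - β - 1)

/-- Cylinder `D_w`. -/
def DustIFS.cyl (Q : DustIFS n ρ) (w : List ℕ) : Set ℝ := affWord ρ Q.d w '' Q.D

/-- Left patch `L_k(D_w)`. -/
def DustIFS.patchL (Q : DustIFS n ρ) (α : ℕ) (w : List ℕ) (k : ℕ) : Set ℝ :=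
  ⋃ j ∈ Finset.range α, Q.cyl (w ++ List.replicate k 0 ++ [j])

/-- Right patch `R_k(D_w)`. -/
def DustIFS.patchR (Q : DustIFS n ρ) (β : ℕ) (w : List ℕ) (k : ℕ) : Set ℝ :=
  ⋃ j ∈ Finset.Ico (n - β) n, Q.cyl (w ++ List.replicate k (n - 1) ++ [j])

/-- `τ k` is the unique positive integer with `ρₙᵏ ρ₁ < ρ₁ ^ τ(k) ≤ ρₙᵏ`. -/
def tauSpec (ρ : ℕ → ℝ) (n : ℕ) (τ : ℕ → ℕ) : Prop :=
  ∀ k, 1 ≤ k → 1 ≤ τ k ∧ ρ (n - 1) ^ k * ρ 0 < ρ 0 ^ τ k ∧ ρ 0 ^ τ k ≤ ρ (n - 1) ^ k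

/-- `Cᵏ = R_k(T_{i₀}) ∪ L_{τ(k)}(T_{i₀+1})`. -/
def Cset (S : TouchingIFS n ρ) (α β i₀ : ℕ) (τ : ℕ → ℕ) (k : ℕ) : Set ℝ :=
  S.patchR β [i₀] k ∪ S.patchL α [i₀ + 1] (τ k)

/-- The touching letter `i` is left substitutable. -/
def TouchingIFS.LeftSub (S : TouchingIFS n ρ) (α : ℕ) (i : ℕ) : Prop :=
  ∃ (w : List ℕ) (a : ℕ) (k k' : ℕ), (∀ b ∈ w ++ [a], b < n) ∧
    Metric.diam (S.patchL α [i + 1] k) = Metric.diam (S.patchL α (i :: (w ++ [a])) k') ∧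
    a ≠ 0 ∧ ∀ ℓ, S.touch ℓ → a ≠ ℓ + 1

/-- The touching letter `i` is right substitutable. -/
def TouchingIFS.RightSub (S : TouchingIFS n ρ) (β : ℕ) (i : ℕ) : Prop :=
  ∃ (w : List ℕ) (a : ℕ) (k k' : ℕ), (∀ b ∈ w ++ [a], b < n) ∧
    Metric.diam (S.patchR β [i] k) = Metric.diam (S.patchR β ((i + 1) :: (w ++ [a])) k') ∧
    a ≠ n - 1 ∧ ¬ S.touch a

/-- Convex hull of a bounded set of reals: the minimal closed interval containing it. -/
def CH (B : Set ℝ) : Set ℝ := Set.Icc (sInf B) (sSup B)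

/-- `[a,b]` is a maximal run of touching letters (a first-level connected component). -/
def TouchingIFS.run (S : TouchingIFS n ρ) (a b : ℕ) : Prop :=
  a ≤ b ∧ b < n ∧ (∀ i, a ≤ i → i < b → S.touch i) ∧
  (a = 0 ∨ ¬ S.touch (a - 1)) ∧ (b = n - 1 ∨ ¬ S.touch b)

/-- Membership in the class `𝒯⁽¹⁾`: a `T`-separate copy `Ψ_w(T⁽¹⁾_j)`. -/
def TouchingIFS.T1mem (S : TouchingIFS n ρ) (X : Set ℝ) : Prop :=
  ∃ (w : List ℕ) (a b : ℕ), (∀ c ∈ w, c < n) ∧ S.run a b ∧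
    X = affWord ρ S.t w '' (⋃ j ∈ Finset.Icc a b, S.cyl [j]) ∧
    0 < setDist X (S.T \ X)

/-- Membership in the class `𝒯⁽²⁾`: a copy `Ψ_w(T⁽²⁾_i) = Ψ_w(R₀(T_i) ∪ L₀(T_{i+1}))`. -/
def TouchingIFS.T2mem (S : TouchingIFS n ρ) (α β : ℕ) (X : Set ℝ) : Prop :=
  ∃ (w : List ℕ) (i : ℕ), (∀ c ∈ w, c < n) ∧ S.touch i ∧
    X = affWord ρ S.t w '' (S.patchR β [i] 0 ∪ S.patchL α [i + 1] 0)

/-- An admissible family for the simple decomposition of `E` by the `A i`. -/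
def GoodFam (E : Set ℝ) {k : ℕ} (A : Fin k → Set ℝ) (𝒮 : Finset (Set ℝ)) : Prop :=
  (∀ B ∈ 𝒮, IsCompact B ∧ B ⊆ E) ∧ (⋃ B ∈ 𝒮, B) = E ∧
  (∀ B ∈ 𝒮, ∀ B' ∈ 𝒮, B ≠ B' → CH B ∩ CH B' = ∅) ∧ (∀ i, A i ∈ 𝒮)

/-- existence and uniqueness of the simple decomposition of a compact
set `E ⊆ ℝ` by a family of `E`-separate sets with disjoint convex hulls, together
with the containing property. -/
theorem simple_decomposition_exists_unique (E : Set ℝ) (hE : IsCompact E)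
    {k : ℕ} (A : Fin k → Set ℝ)
    (hAc : ∀ i, IsCompact (A i)) (hAne : ∀ i, (A i).Nonempty)
    (hAsub : ∀ i, A i ⊆ E)
    (hsep : ∀ i, 0 < setDist (A i) (E \ A i))
    (hCH : ∀ i, CH (A i) ∩ E = A i)
    (hdisj : ∀ i j, i ≠ j → CH (A i) ∩ CH (A j) = ∅) :
    ∃ 𝒮 : Finset (Set ℝ),
      GoodFam E A 𝒮 ∧
      (∀ 𝒮' : Finset (Set ℝ), GoodFam E A 𝒮' → 𝒮.card ≤ 𝒮'.card) ∧
      (∀ 𝒮' : Finset (Set ℝ), GoodFam E A 𝒮' → 𝒮'.card ≤ 𝒮.card → 𝒮' = 𝒮) ∧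
      (∀ B : Set ℝ, B.Nonempty → B ⊆ E → (CH B ∩ ⋃ i, A i) = ∅ →
        ∃! F, F ∈ 𝒮 ∧ B ⊆ F) := by
  classical
  set U : Set ℝ := ⋃ i, A i with hUdef
  have hUiff : ∀ y : ℝ, y ∈ U ↔ ∃ i, y ∈ A i := fun y => by
    rw [hUdef]; exact Set.mem_iUnion
  have hCHmem : ∀ (X : Set ℝ) (p : ℝ), p ∈ CH X ↔ sInf X ≤ p ∧ p ≤ sSup X :=
    fun X p => Set.mem_Icc
  have hsep' : ∀ i, ∀ a ∈ A i, ∀ e ∈ E \ A i, setDist (A i) (E \ A i) ≤ dist a e := by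
    intro i a ha e he
    apply csInf_le
    · refine ⟨0, fun z hz => ?_⟩
      obtain ⟨x, hx, y, hy, rfl⟩ := hz
      exact dist_nonneg
    · exact Set.mem_image2_of_mem ha he
  have hsup_mem : ∀ i, sSup (A i) ∈ A i := fun i => (hAc i).sSup_mem (hAne i)
  have hACH : ∀ i, A i ⊆ CH (A i) := fun i x hx =>
    (hCHmem _ _).2 ⟨csInf_le (hAc i).bddBelow hx, le_csSup (hAc i).bddAbove hx⟩
  have hsISS : ∀ i, sInf (A i) ≤ sSup (A i) := fun i =>
    csInf_le_csSup (hAne i) (hAc i).bddBelow (hAc i).bddAbove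
  have hnotCH : ∀ i, ∀ y ∈ E \ U, y ∉ CH (A i) := by
    intro i y hy hc
    have h1 : y ∈ CH (A i) ∩ E := ⟨hc, hy.1⟩
    rw [hCH i] at h1
    exact hy.2 ((hUiff y).2 ⟨i, h1⟩)
  have hEAi : ∀ i, ∀ y ∈ E, (y ∉ A i ↔ setDist (A i) (E \ A i) ≤ Metric.infDist y (A i)) := by
    intro i y hyE
    constructor
    · intro hyA
      rw [Metric.infDist_eq_iInf]
      have : Nonempty ↥(A i) := (hAne i).to_subtype
      exact le_ciInf fun a => by
        rw [dist_comm]; exact hsep' i a a.2 y ⟨hyE, hyA⟩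
    · intro h hyA
      rw [Metric.infDist_zero_of_mem hyA] at h
      exact absurd (lt_of_lt_of_le (hsep i) h) (lt_irrefl 0)
  have hEUclosed : IsClosed (E \ U) := by
    have hEU : E \ U = E ∩ ⋂ i, {y | setDist (A i) (E \ A i) ≤ Metric.infDist y (A i)} := by
      ext y
      simp only [Set.mem_diff, Set.mem_inter_iff, Set.mem_iInter, Set.mem_setOf_eq, hUiff,
        not_exists]
      constructor
      · rintro ⟨hyE, hyU⟩; exact ⟨hyE, fun i => (hEAi i y hyE).1 (hyU i)⟩
      · rintro ⟨hyE, h⟩; exact ⟨hyE, fun i => (hEAi i y hyE).2 (h i)⟩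
    rw [hEU]
    exact hE.isClosed.inter (isClosed_iInter fun i =>
      isClosed_le continuous_const (Metric.continuous_infDist_pt _))
  set f : ℝ → Finset (Fin k) := fun y => Finset.univ.filter (fun i => sSup (A i) < y) with hfdef
  have hfmem : ∀ (y : ℝ) (i : Fin k), i ∈ f y ↔ sSup (A i) < y := by
    intro y i; rw [hfdef]; simp [Finset.mem_filter]
  have hfmono : ∀ x y : ℝ, x ≤ y → f x ⊆ f y := fun x y hxy i hi =>
    (hfmem y i).2 (lt_of_lt_of_le ((hfmem x i).1 hi) hxy)
  set G : Finset (Fin k) → Set ℝ := fun s => {y | y ∈ E \ U ∧ f y = s} with hGdef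
  have hGmem : ∀ (s : Finset (Fin k)) (y : ℝ), y ∈ G s ↔ (y ∈ E \ U ∧ f y = s) := by
    intro s y; rw [hGdef]; exact Iff.rfl
  have hGsubEU : ∀ s, G s ⊆ E \ U := fun s y hy => ((hGmem s y).1 hy).1
  have hGsubE : ∀ s, G s ⊆ E := fun s y hy => (hGsubEU s hy).1
  have hGeq : ∀ s, G s = (E \ U) ∩
      ⋂ i, (if i ∈ s then Set.Ici (sSup (A i) + setDist (A i) (E \ A i))
            else Set.Iic (sSup (A i))) := by
    intro s
    ext y
    rw [hGmem]
    constructor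
    · rintro ⟨hyEU, hfy⟩
      refine ⟨hyEU, Set.mem_iInter.2 fun i => ?_⟩
      by_cases hi : i ∈ s
      · rw [if_pos hi]
        have hlt : sSup (A i) < y := (hfmem y i).1 (hfy.symm ▸ hi)
        have hyA : y ∉ A i := fun hyA => hyEU.2 ((hUiff y).2 ⟨i, hyA⟩)
        have hd := hsep' i (sSup (A i)) (hsup_mem i) y ⟨hyEU.1, hyA⟩
        rw [Real.dist_eq, abs_of_nonpos (by linarith)] at hd
        exact Set.mem_Ici.2 (by linarith)
      · rw [if_neg hi]
        exact Set.mem_Iic.2 (not_lt.1 fun hlt => hi (hfy ▸ (hfmem y i).2 hlt))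
    · rintro ⟨hyEU, hy⟩
      refine ⟨hyEU, Finset.ext fun i => ?_⟩
      rw [hfmem]
      have hyi := Set.mem_iInter.1 hy i
      constructor
      · intro hlt
        by_contra hi
        rw [if_neg hi] at hyi
        exact absurd hlt (not_lt.2 (Set.mem_Iic.1 hyi))
      · intro hi
        rw [if_pos hi] at hyi
        have h1 := hsep i
        have h2 := Set.mem_Ici.1 hyi
        linarith
  have hGclosed : ∀ s, IsClosed (G s) := by
    intro s
    rw [hGeq s]
    refine hEUclosed.inter (isClosed_iInter fun i => ?_)
    by_cases hi : i ∈ s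
    · rw [if_pos hi]; exact isClosed_Ici
    · rw [if_neg hi]; exact isClosed_Iic
  have hGcompact : ∀ s, IsCompact (G s) := fun s =>
    hE.of_isClosed_subset (hGclosed s) (hGsubE s)
  have hsubCH : ∀ (B : Set ℝ), B ⊆ E → ∀ x ∈ B, x ∈ CH B := fun B hBE x hx =>
    (hCHmem _ _).2 ⟨csInf_le (hE.bddBelow.mono hBE) hx, le_csSup (hE.bddAbove.mono hBE) hx⟩
  have huIccCH : ∀ (B : Set ℝ), B ⊆ E → ∀ x ∈ B, ∀ y ∈ B, Set.uIcc x y ⊆ CH B := by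
    intro B hBE x hx y hy z hz
    rcases Set.mem_uIcc.1 hz with ⟨h1, h2⟩ | ⟨h1, h2⟩
    · exact (hCHmem _ _).2 ⟨le_trans ((hCHmem _ _).1 (hsubCH B hBE x hx)).1 h1,
        le_trans h2 ((hCHmem _ _).1 (hsubCH B hBE y hy)).2⟩
    · exact (hCHmem _ _).2 ⟨le_trans ((hCHmem _ _).1 (hsubCH B hBE y hy)).1 h1,
        le_trans h2 ((hCHmem _ _).1 (hsubCH B hBE x hx)).2⟩
  have L1 : ∀ x ∈ E \ U, ∀ y ∈ E \ U, f x ≠ f y → ∃ i, sSup (A i) ∈ Set.uIcc x y := by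
    intro x hx y hy hne
    have hex : ∃ i, (i ∈ f x ∧ i ∉ f y) ∨ (i ∉ f x ∧ i ∈ f y) := by
      by_contra h
      push_neg at h
      exact hne (Finset.ext fun i => by have := h i; tauto)
    obtain ⟨i, hi⟩ := hex
    refine ⟨i, ?_⟩
    rcases hi with ⟨h1, h2⟩ | ⟨h1, h2⟩
    · have h1' : sSup (A i) < x := (hfmem x i).1 h1
      have h2' : y ≤ sSup (A i) := not_lt.1 fun h => h2 ((hfmem y i).2 h)
      exact Set.mem_uIcc.2 (Or.inr ⟨h2', h1'.le⟩)
    · have h2' : sSup (A i) < y := (hfmem y i).1 h2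
      have h1' : x ≤ sSup (A i) := not_lt.1 fun h => h1 ((hfmem x i).2 h)
      exact Set.mem_uIcc.2 (Or.inl ⟨h1', h2'.le⟩)
  have L2 : ∀ s, (G s).Nonempty → ∀ i, CH (G s) ∩ CH (A i) = ∅ := by
    intro s hs i
    rw [Set.eq_empty_iff_forall_notMem]
    rintro p ⟨hp1, hp2⟩
    have ha : sInf (G s) ∈ G s := (hGcompact s).sInf_mem hs
    have hb : sSup (G s) ∈ G s := (hGcompact s).sSup_mem hs
    obtain ⟨hpa, hpb⟩ := (hCHmem _ _).1 hp1
    obtain ⟨hip1, hip2⟩ := (hCHmem _ _).1 hp2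
    have hanot := hnotCH i _ (hGsubEU s ha)
    have hbnot := hnotCH i _ (hGsubEU s hb)
    have ha2 : sInf (G s) < sInf (A i) := by
      by_contra h
      push_neg at h
      exact hanot ((hCHmem _ _).2 ⟨h, le_trans hpa hip2⟩)
    have hb2 : sSup (A i) < sSup (G s) := by
      by_contra h
      push_neg at h
      exact hbnot ((hCHmem _ _).2 ⟨le_trans hip1 hpb, h⟩)
    have h1 : i ∈ f (sSup (G s)) := (hfmem _ i).2 hb2
    have h2 : i ∉ f (sInf (G s)) := fun h => by
      have := (hfmem _ i).1 h
      have := hsISS i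
      linarith
    rw [((hGmem s _).1 hb).2] at h1
    rw [((hGmem s _).1 ha).2] at h2
    exact h2 h1
  have L2key : ∀ s s', (G s).Nonempty → (G s').Nonempty →
      (∃ p, p ∈ CH (G s) ∩ CH (G s')) → sInf (G s) ≤ sInf (G s') → s = s' := by
    rintro s s' hs hs' ⟨p, hp⟩ hle
    have ha1 : sInf (G s) ∈ G s := (hGcompact s).sInf_mem hs
    have hb1 : sSup (G s) ∈ G s := (hGcompact s).sSup_mem hs
    have ha2 : sInf (G s') ∈ G s' := (hGcompact s').sInf_mem hs'
    have e1 : f (sInf (G s)) = s := ((hGmem s _).1 ha1).2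
    have e2 : f (sSup (G s)) = s := ((hGmem s _).1 hb1).2
    have e3 : f (sInf (G s')) = s' := ((hGmem s' _).1 ha2).2
    have h1 : sInf (G s') ≤ sSup (G s) :=
      le_trans ((hCHmem _ _).1 hp.2).1 ((hCHmem _ _).1 hp.1).2
    have s12 : s ⊆ s' := by rw [← e1, ← e3]; exact hfmono _ _ hle
    have s21 : s' ⊆ s := by rw [← e3, ← e2]; exact hfmono _ _ h1
    exact Finset.Subset.antisymm s12 s21
  have L2' : ∀ s s', (G s).Nonempty → (G s').Nonempty → s ≠ s' →
      CH (G s) ∩ CH (G s') = ∅ := by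
    intro s s' hs hs' hne
    rw [Set.eq_empty_iff_forall_notMem]
    intro p hp
    rcases le_total (sInf (G s)) (sInf (G s')) with h | h
    · exact hne (L2key s s' hs hs' ⟨p, hp⟩ h)
    · exact hne (L2key s' s hs' hs ⟨p, hp.2, hp.1⟩ h).symm
  set 𝒮 : Finset (Set ℝ) :=
    (Finset.univ.image A) ∪ (Finset.univ.image G).filter (fun S => S.Nonempty) with h𝒮def
  have hmem𝒮 : ∀ B : Set ℝ, B ∈ 𝒮 ↔ ((∃ i, A i = B) ∨ ((∃ s, G s = B) ∧ B.Nonempty)) := by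
    intro B
    rw [h𝒮def]
    simp only [Finset.mem_union, Finset.mem_filter, Finset.mem_image, Finset.mem_univ, true_and]
    try tauto
  have h𝒮ne : ∀ B ∈ 𝒮, B.Nonempty := by
    intro B hB
    rcases (hmem𝒮 B).1 hB with ⟨i, rfl⟩ | ⟨_, hne⟩
    · exact hAne i
    · exact hne
  have hGood : GoodFam E A 𝒮 := by
    have hcomp : ∀ B ∈ 𝒮, IsCompact B ∧ B ⊆ E := by
      intro B hB
      rcases (hmem𝒮 B).1 hB with ⟨i, rfl⟩ | ⟨⟨s, rfl⟩, hne⟩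
      · exact ⟨hAc i, hAsub i⟩
      · exact ⟨hGcompact s, hGsubE s⟩
    refine ⟨hcomp, ?_, ?_, ?_⟩
    · ext y
      simp only [Set.mem_iUnion, exists_prop]
      constructor
      · rintro ⟨B, hB, hy⟩
        exact (hcomp B hB).2 hy
      · intro hy
        by_cases hyU : y ∈ U
        · obtain ⟨i, hyi⟩ := (hUiff y).1 hyU
          exact ⟨A i, (hmem𝒮 _).2 (Or.inl ⟨i, rfl⟩), hyi⟩
        · refine ⟨G (f y), (hmem𝒮 _).2 (Or.inr ⟨⟨f y, rfl⟩, ⟨y, (hGmem _ _).2 ⟨⟨hy, hyU⟩, rfl⟩⟩⟩),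
            (hGmem _ _).2 ⟨⟨hy, hyU⟩, rfl⟩⟩
    · intro B hB B' hB' hne
      rcases (hmem𝒮 B).1 hB with ⟨i, rfl⟩ | ⟨⟨s, rfl⟩, hnes⟩ <;>
        rcases (hmem𝒮 B').1 hB' with ⟨j, rfl⟩ | ⟨⟨s', rfl⟩, hnes'⟩
      · exact hdisj i j fun h => hne (congrArg A h)
      · rw [Set.inter_comm]; exact L2 s' hnes' i
      · exact L2 s hnes j
      · exact L2' s s' hnes hnes' fun h => hne (congrArg G h)
    · intro i
      exact (hmem𝒮 _).2 (Or.inl ⟨i, rfl⟩)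
  have L4 : ∀ (𝒮' : Finset (Set ℝ)), GoodFam E A 𝒮' → ∀ F ∈ 𝒮', ∀ i,
      (F ∩ A i).Nonempty → F = A i := by
    rintro 𝒮' h𝒮' F hF i ⟨p, hp1, hp2⟩
    by_contra hne
    have hdis := h𝒮'.2.2.1 F hF (A i) (h𝒮'.2.2.2 i) hne
    have hpF : p ∈ CH F := hsubCH F (h𝒮'.1 F hF).2 p hp1
    have hpA : p ∈ CH (A i) := hACH i hp2
    have : p ∈ CH F ∩ CH (A i) := ⟨hpF, hpA⟩
    rw [hdis] at this
    exact this
  have L3 : ∀ (𝒮' : Finset (Set ℝ)), GoodFam E A 𝒮' → ∀ F ∈ 𝒮', ∀ x ∈ F, ∀ y ∈ F,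
      x ∈ E \ U → y ∈ E \ U → f x = f y := by
    intro 𝒮' h𝒮' F hF x hxF y hyF hx hy
    by_contra hne
    obtain ⟨i, hi⟩ := L1 x hx y hy hne
    have h1 : sSup (A i) ∈ CH F := huIccCH F (h𝒮'.1 F hF).2 x hxF y hyF hi
    have h2 : sSup (A i) ∈ CH (A i) := hACH i (hsup_mem i)
    have hFA : F ≠ A i := fun h => hx.2 ((hUiff x).2 ⟨i, h ▸ hxF⟩)
    have hdis := h𝒮'.2.2.1 F hF (A i) (h𝒮'.2.2.2 i) hFA
    have : sSup (A i) ∈ CH F ∩ CH (A i) := ⟨h1, h2⟩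
    rw [hdis] at this
    exact this
  have hφ : ∀ (𝒮' : Finset (Set ℝ)), GoodFam E A 𝒮' → ∃ φ : Set ℝ → Set ℝ,
      (∀ B ∈ 𝒮, φ B ∈ 𝒮' ∧ (B ∩ φ B).Nonempty) ∧ Set.InjOn φ ↑𝒮 := by
    intro 𝒮' h𝒮'
    have hex : ∀ B ∈ 𝒮, ∃ F, F ∈ 𝒮' ∧ (B ∩ F).Nonempty := by
      intro B hB
      obtain ⟨p, hp⟩ := h𝒮ne B hB
      have hpE : p ∈ E := (hGood.1 B hB).2 hp
      have hpU : p ∈ ⋃ F ∈ 𝒮', F := by rw [h𝒮'.2.1]; exact hpE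
      simp only [Set.mem_iUnion, exists_prop] at hpU
      obtain ⟨F, hF, hpF⟩ := hpU
      exact ⟨F, hF, ⟨p, hp, hpF⟩⟩
    choose! φ hφ1 hφ2 using hex
    have hAfix : ∀ i, A i ∈ 𝒮 → φ (A i) = A i := by
      intro i hAi
      obtain ⟨p, hp1, hp2⟩ := hφ2 (A i) hAi
      exact L4 𝒮' h𝒮' _ (hφ1 (A i) hAi) i ⟨p, hp2, hp1⟩
    refine ⟨φ, fun B hB => ⟨hφ1 B hB, hφ2 B hB⟩, ?_⟩
    intro B hB B' hB' heq
    have hB𝒮 : B ∈ 𝒮 := hB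
    have hB'𝒮 : B' ∈ 𝒮 := hB'
    rcases (hmem𝒮 B).1 hB𝒮 with ⟨i, rfl⟩ | ⟨⟨s, rfl⟩, hnes⟩ <;>
      rcases (hmem𝒮 B').1 hB'𝒮 with ⟨j, rfl⟩ | ⟨⟨s', rfl⟩, hnes'⟩
    · rw [hAfix i hB𝒮, hAfix j hB'𝒮] at heq
      exact heq
    · exfalso
      rw [hAfix i hB𝒮] at heq
      obtain ⟨q, hq1, hq2⟩ := hφ2 _ hB'𝒮
      rw [← heq] at hq2
      exact (hGsubEU s' hq1).2 ((hUiff q).2 ⟨i, hq2⟩)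
    · exfalso
      rw [hAfix j hB'𝒮] at heq
      obtain ⟨q, hq1, hq2⟩ := hφ2 _ hB𝒮
      rw [heq] at hq2
      exact (hGsubEU s hq1).2 ((hUiff q).2 ⟨j, hq2⟩)
    · obtain ⟨p, hp1, hp2⟩ := hφ2 _ hB𝒮
      obtain ⟨q, hq1, hq2⟩ := hφ2 _ hB'𝒮
      rw [heq] at hp2
      have hfs : f p = f q := L3 𝒮' h𝒮' _ (hφ1 _ hB'𝒮) p hp2 q hq2
        (hGsubEU s hp1) (hGsubEU s' hq1)
      have : s = s' := by
        rw [← ((hGmem s p).1 hp1).2, ← ((hGmem s' q).1 hq1).2, hfs]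
      exact congrArg G this
  refine ⟨𝒮, hGood, ?_, ?_, ?_⟩
  · intro 𝒮' h𝒮'
    obtain ⟨φ, hmaps, hinj⟩ := hφ 𝒮' h𝒮'
    exact Finset.card_le_card_of_injOn φ (fun B hB => (hmaps B hB).1) hinj
  · intro 𝒮' h𝒮' hcard
    obtain ⟨φ, hmaps, hinj⟩ := hφ 𝒮' h𝒮'
    have himg : 𝒮.image φ = 𝒮' := by
      apply Finset.eq_of_subset_of_card_le
      · intro F hF
        obtain ⟨B, hB, rfl⟩ := Finset.mem_image.1 hF
        exact (hmaps B hB).1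
      · rw [Finset.card_image_of_injOn hinj]
        exact hcard
    have hFsubG : ∀ F ∈ 𝒮', ∀ s, (G s ∩ F).Nonempty → F ⊆ G s := by
      rintro F hF s ⟨p, hpG, hpF⟩ y hyF
      have hyE : y ∈ E := (h𝒮'.1 F hF).2 hyF
      have hyU : y ∉ U := by
        intro hyU
        obtain ⟨j, hyj⟩ := (hUiff y).1 hyU
        have hFA : F = A j := L4 𝒮' h𝒮' F hF j ⟨y, hyF, hyj⟩
        exact (hGsubEU s hpG).2 ((hUiff p).2 ⟨j, hFA ▸ hpF⟩)
      have hfy : f y = f p := L3 𝒮' h𝒮' F hF y hyF p hpF ⟨hyE, hyU⟩ (hGsubEU s hpG)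
      exact (hGmem s y).2 ⟨⟨hyE, hyU⟩, hfy.trans ((hGmem s p).1 hpG).2⟩
    have hφid : ∀ B ∈ 𝒮, φ B = B := by
      intro B hB
      rcases (hmem𝒮 B).1 hB with ⟨i, rfl⟩ | ⟨⟨s, rfl⟩, hnes⟩
      · obtain ⟨p, hp1, hp2⟩ := (hmaps _ hB).2
        exact L4 𝒮' h𝒮' _ (hmaps _ hB).1 i ⟨p, hp2, hp1⟩
      · have hsub1 : φ (G s) ⊆ G s := by
          apply hFsubG _ (hmaps _ hB).1 s
          obtain ⟨p, hp1, hp2⟩ := (hmaps _ hB).2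
          exact ⟨p, hp1, hp2⟩
        refine Set.Subset.antisymm hsub1 ?_
        intro y hyG
        have hyE : y ∈ E := hGsubE s hyG
        have hyU' : y ∈ ⋃ F ∈ 𝒮', F := by rw [h𝒮'.2.1]; exact hyE
        simp only [Set.mem_iUnion, exists_prop] at hyU'
        obtain ⟨F', hF', hyF'⟩ := hyU'
        have hF'img : F' ∈ 𝒮.image φ := himg.symm ▸ hF'
        obtain ⟨B'', hB'', hBF⟩ := Finset.mem_image.1 hF'img
        rcases (hmem𝒮 B'').1 hB'' with ⟨j, rfl⟩ | ⟨⟨s'', rfl⟩, hnes''⟩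
        · exfalso
          obtain ⟨p, hp1, hp2⟩ := (hmaps _ hB'').2
          have hFA : F' = A j := hBF ▸ L4 𝒮' h𝒮' _ (hmaps _ hB'').1 j ⟨p, hp2, hp1⟩
          exact (hGsubEU s hyG).2 ((hUiff y).2 ⟨j, hFA ▸ hyF'⟩)
        · have hsub'' : φ (G s'') ⊆ G s'' := by
            apply hFsubG _ (hmaps _ hB'').1 s''
            obtain ⟨p, hp1, hp2⟩ := (hmaps _ hB'').2
            exact ⟨p, hp1, hp2⟩
          have hyG'' : y ∈ G s'' := hsub'' (hBF ▸ hyF')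
          have hss : s'' = s := by
            rw [← ((hGmem s'' y).1 hyG'').2, ← ((hGmem s y).1 hyG).2]
          rw [hss] at hBF
          rw [hBF]
          exact hyF'
    calc 𝒮' = 𝒮.image φ := himg.symm
      _ = 𝒮.image id := Finset.image_congr fun B hB => hφid B hB
      _ = 𝒮 := Finset.image_id
  · intro B hBne hBE hBCH
    have hBCH' : ∀ y ∈ CH B, y ∉ U := fun y hy hyU =>
      Set.eq_empty_iff_forall_notMem.1 hBCH y ⟨hy, hyU⟩
    have hBEU : B ⊆ E \ U := fun y hy => ⟨hBE hy, hBCH' y (hsubCH B hBE y hy)⟩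
    obtain ⟨x₀, hx₀⟩ := hBne
    have hconst : ∀ y ∈ B, f y = f x₀ := by
      intro y hy
      by_contra hne
      obtain ⟨i, hi⟩ := L1 y (hBEU hy) x₀ (hBEU hx₀) hne
      exact hBCH' _ (huIccCH B hBE y hy x₀ hx₀ hi) ((hUiff _).2 ⟨i, hsup_mem i⟩)
    refine ⟨G (f x₀), ⟨(hmem𝒮 _).2 (Or.inr ⟨⟨f x₀, rfl⟩,
      ⟨x₀, (hGmem _ _).2 ⟨hBEU hx₀, rfl⟩⟩⟩),
      fun y hy => (hGmem _ _).2 ⟨hBEU hy, hconst y hy⟩⟩, ?_⟩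
    rintro F ⟨hF𝒮, hBF⟩
    rcases (hmem𝒮 F).1 hF𝒮 with ⟨j, rfl⟩ | ⟨⟨s, rfl⟩, hnes⟩
    · exact absurd ((hUiff x₀).2 ⟨j, hBF hx₀⟩) (hBEU hx₀).2
    · rw [← ((hGmem s x₀).1 (hBF hx₀)).2]
end
end

section
/- With the touching attractor T and notation of the standing setup, for any word i over {1,…,n} and nonnegative integers u < v, the set L_u(T_i) ∖ L_v(T_i) is a finite disjoint union of sets of the form Ψ_w(T_j^{(1)}) and Ψ_w(T_j^{(2)}), i.e., it belongs to the class 𝒯* (it admits the dust-like decomposition into T-separate pieces and level-0 touching pieces described in the paper). -/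
noncomputable section

open Set Metric MeasureTheory

variable {n : ℕ} {ρ : ℕ → ℝ}

namespace TstarAux

variable {n : ℕ} {ρ : ℕ → ℝ}

/-- Abbreviation for the basic maps. -/
abbrev fm (S : TouchingIFS n ρ) (i : ℕ) : ℝ → ℝ := affMap ρ S.t i
/-- Abbreviation for word maps. -/
abbrev Ψw (S : TouchingIFS n ρ) (w : List ℕ) : ℝ → ℝ := affWord ρ S.t w

section Basic
variable (hρ : ContractionVec n ρ) (S : TouchingIFS n ρ)
include hρ

lemma npos : 0 < n := lt_of_lt_of_le (by norm_num) hρ.three_le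

lemma fm_strict {i : ℕ} (hi : i < n) : StrictMono (fm S i) := by
  intro x y hxy
  simp only [fm, affMap]
  nlinarith [hρ.pos i hi]

lemma fm_le {i : ℕ} (hi : i < n) {x y : ℝ} (h : x ≤ y) : fm S i x ≤ fm S i y :=
  (fm_strict hρ S hi).monotone h

lemma chain01 : ∀ {j : ℕ}, j < n → ∀ {i : ℕ}, i < j → fm S i 1 ≤ fm S j 0 := by
  intro j
  induction j with
  | zero => intro _ i hij; exact absurd hij (Nat.not_lt_zero i)
  | succ j ih =>
    intro hj i hij
    rcases Nat.lt_succ_iff_lt_or_eq.mp hij with h | h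
    · calc fm S i 1 ≤ fm S j 0 := ih (lt_trans (Nat.lt_succ_self j) hj) h
        _ ≤ fm S j 1 := fm_le hρ S (lt_trans (Nat.lt_succ_self j) hj) zero_le_one
        _ ≤ fm S (j+1) 0 := S.order j hj
    · subst h; exact S.order i hj

lemma f0_nonneg {i : ℕ} (hi : i < n) : 0 ≤ fm S i 0 := by
  rcases Nat.eq_zero_or_pos i with h | h
  · subst h; exact le_of_eq S.left0.symm
  · calc (0:ℝ) = fm S 0 0 := S.left0.symm
      _ ≤ fm S 0 1 := fm_le hρ S (lt_of_le_of_lt (Nat.zero_le i) hi) zero_le_one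
      _ ≤ fm S i 0 := chain01 hρ S hi h

lemma f1_le_one {i : ℕ} (hi : i < n) : fm S i 1 ≤ 1 := by
  rcases Nat.lt_or_ge i (n-1) with h | h
  · calc fm S i 1 ≤ fm S (n-1) 0 := chain01 hρ S (by omega) h
      _ ≤ fm S (n-1) 1 := fm_le hρ S (by omega) zero_le_one
      _ = 1 := S.right1
  · have : i = n - 1 := by omega
    subst this; exact le_of_eq S.right1

lemma idx0 {i j : ℕ} (hij : i ≤ j) (hj : j < n) : fm S i 0 ≤ fm S j 0 := by
  rcases Nat.lt_or_ge i j with h | h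
  · calc fm S i 0 ≤ fm S i 1 := fm_le hρ S (lt_of_le_of_lt hij hj) zero_le_one
      _ ≤ fm S j 0 := chain01 hρ S hj h
  · have : i = j := le_antisymm hij h
    subst this; exact le_rfl

lemma idx1 {i j : ℕ} (hij : i ≤ j) (hj : j < n) : fm S i 1 ≤ fm S j 1 := by
  rcases Nat.lt_or_ge i j with h | h
  · calc fm S i 1 ≤ fm S j 0 := chain01 hρ S hj h
      _ ≤ fm S j 1 := fm_le hρ S hj zero_le_one
  · have : i = j := le_antisymm hij h
    subst this; exact le_rfl

lemma fm01 {i : ℕ} (hi : i < n) {x : ℝ} (hx : x ∈ Set.Icc (0:ℝ) 1) :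
    fm S i x ∈ Set.Icc (0:ℝ) 1 := by
  constructor
  · exact le_trans (f0_nonneg hρ S hi) (fm_le hρ S hi hx.1)
  · exact le_trans (fm_le hρ S hi hx.2) (f1_le_one hρ S hi)

lemma T_sub : S.T ⊆ Set.Icc (0:ℝ) 1 := by
  have hbddA : BddAbove S.T := S.compactT.bddAbove
  have hbddB : BddBelow S.T := S.compactT.bddBelow
  have hM : sSup S.T ∈ S.T := S.compactT.sSup_mem S.nonemptyT
  have hm : sInf S.T ∈ S.T := S.compactT.sInf_mem S.nonemptyT
  have hMle : sSup S.T ≤ 1 := by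
    have hM2 : sSup S.T ∈ ⋃ i ∈ Finset.range n, affMap ρ S.t i '' S.T := by
      rw [← S.invT]; exact hM
    simp only [Set.mem_iUnion, Finset.mem_range, Set.mem_image] at hM2
    obtain ⟨i, hi, y, hy, hyM⟩ := hM2
    have h1 : y ≤ sSup S.T := le_csSup hbddA hy
    have h2 : ρ i * y + S.t i = sSup S.T := hyM
    have h3 : ρ i * 1 + S.t i ≤ 1 := f1_le_one hρ S hi
    have h4 : 0 < ρ i := hρ.pos i hi
    have h5 : ρ i < 1 := hρ.lt_one i hi
    nlinarith
  have hmge : 0 ≤ sInf S.T := by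
    have hm2 : sInf S.T ∈ ⋃ i ∈ Finset.range n, affMap ρ S.t i '' S.T := by
      rw [← S.invT]; exact hm
    simp only [Set.mem_iUnion, Finset.mem_range, Set.mem_image] at hm2
    obtain ⟨i, hi, y, hy, hym⟩ := hm2
    have h1 : sInf S.T ≤ y := csInf_le hbddB hy
    have h2 : ρ i * y + S.t i = sInf S.T := hym
    have h3 : 0 ≤ ρ i * 0 + S.t i := f0_nonneg hρ S hi
    have h4 : 0 < ρ i := hρ.pos i hi
    have h5 : ρ i < 1 := hρ.lt_one i hi
    nlinarith
  intro x hx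
  exact ⟨le_trans hmge (csInf_le hbddB hx), le_trans (le_csSup hbddA hx) hMle⟩

omit hρ in
lemma fmem {i : ℕ} (hi : i < n) {x : ℝ} (hx : x ∈ S.T) : fm S i x ∈ S.T := by
  rw [S.invT]
  simp only [Set.mem_iUnion, Finset.mem_range, Set.mem_image]
  exact ⟨i, hi, x, hx, rfl⟩

lemma zero_mem : (0:ℝ) ∈ S.T := by
  obtain ⟨x, hx⟩ := S.nonemptyT
  have ht0 : S.t 0 = 0 := by
    have := S.left0; simp only [affMap, mul_zero, zero_add] at this; exact this
  have hseq : ∀ k, ρ 0 ^ k * x ∈ S.T := by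
    intro k; induction k with
    | zero => simpa using hx
    | succ k ih =>
      have h := fmem S (npos hρ) ih
      simp only [fm, affMap, ht0, add_zero] at h
      have : ρ 0 ^ (k+1) * x = ρ 0 * (ρ 0 ^ k * x) := by ring
      rw [this]; exact h
  have hlim : Filter.Tendsto (fun k => ρ 0 ^ k * x) Filter.atTop (nhds 0) := by
    have h := tendsto_pow_atTop_nhds_zero_of_lt_one (le_of_lt (hρ.pos 0 (npos hρ)))
      (hρ.lt_one 0 (npos hρ))
    simpa using h.mul_const x
  exact S.compactT.isClosed.mem_of_tendsto hlim (Filter.Eventually.of_forall hseq)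

lemma one_mem : (1:ℝ) ∈ S.T := by
  obtain ⟨x, hx⟩ := S.nonemptyT
  have hn : n - 1 < n := by have := npos hρ; omega
  have h1 : ρ (n-1) * 1 + S.t (n-1) = 1 := S.right1
  have h1' : ρ (n-1) + S.t (n-1) = 1 := by linarith [h1]
  have hseq : ∀ k, 1 + ρ (n-1) ^ k * (x - 1) ∈ S.T := by
    intro k; induction k with
    | zero => simpa using hx
    | succ k ih =>
      have h := fmem S hn ih
      simp only [fm, affMap] at h
      have : 1 + ρ (n-1) ^ (k+1) * (x - 1)
          = ρ (n-1) * (1 + ρ (n-1) ^ k * (x-1)) + S.t (n-1) := by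
        linear_combination (-1 : ℝ) * h1'
      rw [this]; exact h
  have hlim : Filter.Tendsto (fun k => 1 + ρ (n-1) ^ k * (x-1)) Filter.atTop (nhds 1) := by
    have h := tendsto_pow_atTop_nhds_zero_of_lt_one (le_of_lt (hρ.pos (n-1) hn))
      (hρ.lt_one (n-1) hn)
    have h2 := (h.mul_const (x-1)).const_add 1
    simpa using h2
  exact S.compactT.isClosed.mem_of_tendsto hlim (Filter.Eventually.of_forall hseq)

omit hρ in
lemma ntlt {i : ℕ} (hi : i + 1 < n) (ht : ¬ S.touch i) : fm S i 1 < fm S (i+1) 0 := by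
  rcases lt_or_eq_of_le (S.order i hi) with h | h
  · exact h
  · exact absurd ⟨hi, h⟩ ht

end Basic

section Words
variable (hρ : ContractionVec n ρ) (S : TouchingIFS n ρ)

lemma affWord_append (r t : ℕ → ℝ) (w₁ w₂ : List ℕ) :
    affWord r t (w₁ ++ w₂) = affWord r t w₁ ∘ affWord r t w₂ := by
  induction w₁ with
  | nil => simp [affWord]
  | cons i w ih =>
    funext x
    simp only [List.cons_append, affWord, Function.comp_apply, List.append_eq, ih]

lemma affWord_single (r t : ℕ → ℝ) (i : ℕ) : affWord r t [i] = affMap r t i := rfl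

include hρ

lemma affWord_rep {w : List ℕ} (hw : ∀ c ∈ w, c < n) :
    ∃ m c : ℝ, 0 < m ∧ affWord ρ S.t w = fun x => m * x + c := by
  induction w with
  | nil => exact ⟨1, 0, one_pos, by funext x; simp [affWord]⟩
  | cons i w ih =>
    obtain ⟨m, c, hm, hrep⟩ := ih (fun c hc => hw c (List.mem_cons_of_mem i hc))
    have hi : i < n := hw i (List.mem_cons_self)
    refine ⟨ρ i * m, ρ i * c + S.t i, mul_pos (hρ.pos i hi) hm, ?_⟩
    funext x
    simp only [affWord, Function.comp_apply, hrep, affMap]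
    ring

lemma Ψw_strict {w : List ℕ} (hw : ∀ c ∈ w, c < n) : StrictMono (Ψw S w) := by
  obtain ⟨m, c, hm, hrep⟩ := affWord_rep hρ S hw
  intro x y hxy
  simp only [Ψw, hrep]
  nlinarith

lemma Ψw_mono {w : List ℕ} (hw : ∀ c ∈ w, c < n) {x y : ℝ} (h : x ≤ y) :
    Ψw S w x ≤ Ψw S w y := (Ψw_strict hρ S hw).monotone h

lemma Ψw_image_Ioo {w : List ℕ} (hw : ∀ c ∈ w, c < n) (x y : ℝ) :
    Ψw S w '' Set.Ioo x y = Set.Ioo (Ψw S w x) (Ψw S w y) := by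
  obtain ⟨m, c, hm, hrep⟩ := affWord_rep hρ S hw
  simp only [Ψw, hrep]
  ext z
  constructor
  · rintro ⟨s, hs, rfl⟩
    constructor
    · show m * x + c < m * s + c
      nlinarith [hs.1]
    · show m * s + c < m * y + c
      nlinarith [hs.2]
  · rintro ⟨h1, h2⟩
    refine ⟨(z - c)/m, ⟨?_, ?_⟩, by field_simp; ring⟩
    · rw [lt_div_iff₀ hm]; nlinarith
    · rw [div_lt_iff₀ hm]; nlinarith

lemma Ψw01 {w : List ℕ} (hw : ∀ c ∈ w, c < n) {x : ℝ} (hx : x ∈ Set.Icc (0:ℝ) 1) :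
    Ψw S w x ∈ Set.Icc (0:ℝ) 1 := by
  induction w with
  | nil => simpa [Ψw, affWord]
  | cons i w ih =>
    have hi : i < n := hw i (List.mem_cons_self)
    have h := ih (fun c hc => hw c (List.mem_cons_of_mem i hc))
    exact fm01 hρ S hi h

omit hρ in
lemma Ψw_mem_T {w : List ℕ} (hw : ∀ c ∈ w, c < n) {x : ℝ} (hx : x ∈ S.T) :
    Ψw S w x ∈ S.T := by
  induction w with
  | nil => simpa [Ψw, affWord]
  | cons i w ih =>
    have hi : i < n := hw i (List.mem_cons_self)
    exact fmem S hi (ih (fun c hc => hw c (List.mem_cons_of_mem i hc)))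

end Words

end TstarAux
namespace TstarAux

section Loc
variable {n : ℕ} {ρ : ℕ → ℝ}
variable (hρ : ContractionVec n ρ) (S : TouchingIFS n ρ)

lemma Ψw_append_apply (p w : List ℕ) (z : ℝ) :
    Ψw S (p ++ w) z = Ψw S p (Ψw S w z) := by
  rw [Ψw, affWord_append]; rfl

include hρ

lemma locIoo : ∀ (w : List ℕ), (∀ c ∈ w, c < n) → ∀ x y : ℝ, 0 ≤ x → y ≤ 1 →
    S.T ∩ (Ψw S w '' Set.Ioo x y) ⊆ Ψw S w '' (S.T ∩ Set.Ioo x y) := by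
  intro w
  induction w with
  | nil =>
    intro _ x y _ _
    simp only [Ψw, affWord, Set.image_id]
    exact fun z hz => hz
  | cons i w ih =>
    intro hw x y hx hy
    by_cases hxy : x < y
    swap
    · rw [Set.Ioo_eq_empty hxy]; simp
    have hi : i < n := hw i (List.mem_cons_self)
    have hw' : ∀ c ∈ w, c < n := fun c hc => hw c (List.mem_cons_of_mem i hc)
    intro z hz
    obtain ⟨hzT, hzim⟩ := hz
    rw [show Ψw S (i::w) = fm S i ∘ Ψw S w from rfl, Set.image_comp,
      Ψw_image_Ioo hρ S hw'] at hzim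
    set x' := Ψw S w x with hxdef
    set y' := Ψw S w y with hydef
    have hx'01 : x' ∈ Set.Icc (0:ℝ) 1 := Ψw01 hρ S hw' ⟨hx, le_of_lt (lt_of_lt_of_le hxy hy)⟩
    have hy'01 : y' ∈ Set.Icc (0:ℝ) 1 := Ψw01 hρ S hw' ⟨le_trans hx (le_of_lt hxy), hy⟩
    obtain ⟨s, hs, hsz⟩ := hzim
    have hzT' : z ∈ ⋃ e ∈ Finset.range n, affMap ρ S.t e '' S.T := by
      rw [← S.invT]; exact hzT
    simp only [Set.mem_iUnion, Finset.mem_range, Set.mem_image] at hzT'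
    obtain ⟨e, he, s₂, hs₂, hes⟩ := hzT'
    have hT01 := T_sub hρ S
    rcases lt_trichotomy e i with hlt | heq | hgt
    · exfalso
      have hz1 : z ≤ fm S e 1 := by
        rw [← hes]; exact fm_le hρ S he (hT01 hs₂).2
      have hz2 : fm S e 1 ≤ fm S i 0 := chain01 hρ S hi hlt
      have hz3 : fm S i 0 ≤ fm S i x' := fm_le hρ S hi hx'01.1
      have hz4 : fm S i x' < fm S i s := fm_strict hρ S hi hs.1
      rw [hsz] at hz4
      linarith
    · have hes' : fm S i s₂ = z := by rw [← heq]; exact hes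
      have hss : s₂ = s := (fm_strict hρ S hi).injective (hes'.trans hsz.symm)
      have hmem : s ∈ S.T ∩ (Ψw S w '' Set.Ioo x y) := by
        refine ⟨hss ▸ hs₂, ?_⟩
        rw [Ψw_image_Ioo hρ S hw']; exact hs
      have hrec := ih hw' x y hx hy hmem
      rw [show Ψw S (i::w) = fm S i ∘ Ψw S w from rfl, Set.image_comp]
      exact ⟨s, hrec, hsz⟩
    · exfalso
      have hz1 : fm S e 0 ≤ z := by
        rw [← hes]; exact fm_le hρ S he (hT01 hs₂).1
      have hz2 : fm S i 1 ≤ fm S e 0 := chain01 hρ S he hgt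
      have hz3 : fm S i y' ≤ fm S i 1 := fm_le hρ S hi hy'01.2
      have hz4 : fm S i s < fm S i y' := fm_strict hρ S hi hs.2
      rw [hsz] at hz4
      linarith

lemma gapTrans {w : List ℕ} (hw : ∀ c ∈ w, c < n) {x y : ℝ} (hx : 0 ≤ x) (hy : y ≤ 1)
    (h : S.T ∩ Set.Ioo x y = ∅) :
    S.T ∩ Set.Ioo (Ψw S w x) (Ψw S w y) = ∅ := by
  rw [← Ψw_image_Ioo hρ S hw]
  apply Set.eq_empty_of_subset_empty
  refine subset_trans (locIoo hρ S w hw x y hx hy) ?_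
  rw [h]; simp

lemma transIcc {w : List ℕ} (hw : ∀ c ∈ w, c < n) {x y : ℝ} {Y : Set ℝ}
    (hY : Y = S.T ∩ Set.Icc x y) (hxY : x ∈ Y) (hyY : y ∈ Y) (hx : 0 ≤ x) (hy : y ≤ 1) :
    Ψw S w '' Y = S.T ∩ Set.Icc (Ψw S w x) (Ψw S w y) := by
  apply Set.Subset.antisymm
  · rintro _ ⟨s, hs, rfl⟩
    have hsT : s ∈ S.T := (hY ▸ hs).1
    have hsI : s ∈ Set.Icc x y := (hY ▸ hs).2
    exact ⟨Ψw_mem_T S hw hsT, Ψw_mono hρ S hw hsI.1, Ψw_mono hρ S hw hsI.2⟩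
  · rintro z ⟨hzT, hz1, hz2⟩
    rcases eq_or_lt_of_le hz1 with he | hlt1
    · exact ⟨x, hxY, he⟩
    rcases eq_or_lt_of_le hz2 with he | hlt2
    · exact ⟨y, hyY, he.symm⟩
    have hzm : z ∈ S.T ∩ (Ψw S w '' Set.Ioo x y) := by
      rw [Ψw_image_Ioo hρ S hw]; exact ⟨hzT, hlt1, hlt2⟩
    obtain ⟨s, ⟨hsT, hsI⟩, rfl⟩ := locIoo hρ S w hw x y hx hy hzm
    exact ⟨s, hY ▸ ⟨hsT, le_of_lt hsI.1, le_of_lt hsI.2⟩, rfl⟩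

lemma junction_gap {i : ℕ} (hi : i + 1 < n) :
    S.T ∩ Set.Ioo (fm S i 1) (fm S (i+1) 0) = ∅ := by
  apply Set.eq_empty_iff_forall_notMem.mpr
  rintro z ⟨hzT, h1, h2⟩
  have hzT' : z ∈ ⋃ e ∈ Finset.range n, affMap ρ S.t e '' S.T := by
    rw [← S.invT]; exact hzT
  simp only [Set.mem_iUnion, Finset.mem_range, Set.mem_image] at hzT'
  obtain ⟨e, he, s₂, hs₂, hes⟩ := hzT'
  have hT01 := T_sub hρ S
  rcases Nat.lt_or_ge e (i+1) with hle | hge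
  · have : z ≤ fm S i 1 := by
      rw [← hes]
      exact le_trans (fm_le hρ S he (hT01 hs₂).2) (idx1 hρ S (by omega) (by omega))
    linarith
  · have : fm S (i+1) 0 ≤ z := by
      rw [← hes]
      exact le_trans (idx0 hρ S hge he) (fm_le hρ S he (hT01 hs₂).1)
    linarith

lemma fm1_mem01 {i : ℕ} (hi : i < n) : fm S i 1 ∈ Set.Icc (0:ℝ) 1 :=
  fm01 hρ S hi ⟨zero_le_one, le_rfl⟩

lemma fm0_mem01 {i : ℕ} (hi : i < n) : fm S i 0 ∈ Set.Icc (0:ℝ) 1 :=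
  fm01 hρ S hi ⟨le_rfl, zero_le_one⟩

lemma junction_gapW {w : List ℕ} (hw : ∀ c ∈ w, c < n) {i : ℕ} (hi : i + 1 < n) :
    S.T ∩ Set.Ioo (Ψw S w (fm S i 1)) (Ψw S w (fm S (i+1) 0)) = ∅ :=
  gapTrans hρ S hw (fm1_mem01 hρ S (by omega)).1 (fm0_mem01 hρ S hi).2 (junction_gap hρ S hi)

end Loc

/-- The set `T⁽¹⁾`-style base union. -/
def T1base {n : ℕ} {ρ : ℕ → ℝ} (S : TouchingIFS n ρ) (a b : ℕ) : Set ℝ :=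
  ⋃ j ∈ Finset.Icc a b, affMap ρ S.t j '' S.T

/-- The set `T⁽²⁾`-style base union. -/
def T2base {n : ℕ} {ρ : ℕ → ℝ} (S : TouchingIFS n ρ) (α β j : ℕ) : Set ℝ :=
  S.patchR β [j] 0 ∪ S.patchL α [j + 1] 0

/-- A base piece: all of its word images are in `𝒯⁽¹⁾ ∪ 𝒯⁽²⁾`. -/
def Piece {n : ℕ} {ρ : ℕ → ℝ} (S : TouchingIFS n ρ) (α β : ℕ) (X : Set ℝ) : Prop :=
  ∀ p : List ℕ, (∀ c ∈ p, c < n) →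
    S.T1mem (affWord ρ S.t p '' X) ∨ S.T2mem α β (affWord ρ S.t p '' X)

section Pieces
variable {n : ℕ} {ρ : ℕ → ℝ}
variable (hρ : ContractionVec n ρ) (S : TouchingIFS n ρ)

lemma cyl_single (j : ℕ) : S.cyl [j] = fm S j '' S.T := rfl

lemma cyl_pair (j c : ℕ) : S.cyl [j, c] = fm S j '' (fm S c '' S.T) := by
  simp only [TouchingIFS.cyl, affWord, Set.image_comp, Set.image_id]

include hρ

lemma T1base_eq {a b : ℕ} (hab : a ≤ b) (hb : b < n) :
    T1base S a b = S.T ∩ Set.Icc (fm S a 0) (fm S b 1) := by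
  have ha : a < n := lt_of_le_of_lt hab hb
  apply Set.Subset.antisymm
  · intro z hz
    simp only [T1base, Set.mem_iUnion, Finset.mem_Icc, Set.mem_image] at hz
    obtain ⟨j, ⟨hja, hjb⟩, s, hsT, rfl⟩ := hz
    have hj : j < n := lt_of_le_of_lt hjb hb
    refine ⟨fmem S hj hsT, ?_, ?_⟩
    · exact le_trans (idx0 hρ S hja hj) (fm_le hρ S hj (T_sub hρ S hsT).1)
    · exact le_trans (fm_le hρ S hj (T_sub hρ S hsT).2) (idx1 hρ S hjb hb)
  · rintro z ⟨hzT, hz1, hz2⟩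
    simp only [T1base, Set.mem_iUnion, Finset.mem_Icc, Set.mem_image]
    rcases eq_or_lt_of_le hz1 with he | hlt1
    · exact ⟨a, ⟨le_rfl, hab⟩, 0, zero_mem hρ S, he⟩
    rcases eq_or_lt_of_le hz2 with he | hlt2
    · exact ⟨b, ⟨hab, le_rfl⟩, 1, one_mem hρ S, he.symm⟩
    have hzT' : z ∈ ⋃ e ∈ Finset.range n, affMap ρ S.t e '' S.T := by
      rw [← S.invT]; exact hzT
    simp only [Set.mem_iUnion, Finset.mem_range, Set.mem_image] at hzT'
    obtain ⟨e, he, s₂, hs₂, hes⟩ := hzT'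
    have hT01 := T_sub hρ S
    have hae : a ≤ e := by
      by_contra hcon
      push_neg at hcon
      have : z ≤ fm S a 0 := by
        rw [← hes]
        exact le_trans (fm_le hρ S he (hT01 hs₂).2) (chain01 hρ S ha hcon)
      linarith
    have heb : e ≤ b := by
      by_contra hcon
      push_neg at hcon
      have : fm S b 1 ≤ z := by
        rw [← hes]
        exact le_trans (chain01 hρ S he hcon) (fm_le hρ S he (hT01 hs₂).1)
      linarith
    exact ⟨e, ⟨hae, heb⟩, s₂, hs₂, hes⟩

lemma fa0_mem_T1base {a b : ℕ} (hab : a ≤ b) : fm S a 0 ∈ T1base S a b := by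
  simp only [T1base, Set.mem_iUnion, Finset.mem_Icc, Set.mem_image]
  exact ⟨a, ⟨le_rfl, hab⟩, 0, zero_mem hρ S, rfl⟩

lemma fb1_mem_T1base {a b : ℕ} (hab : a ≤ b) : fm S b 1 ∈ T1base S a b := by
  simp only [T1base, Set.mem_iUnion, Finset.mem_Icc, Set.mem_image]
  exact ⟨b, ⟨hab, le_rfl⟩, 1, one_mem hρ S, rfl⟩

omit hρ in
lemma patchR0_eq (β j : ℕ) :
    S.patchR β [j] 0 = ⋃ c ∈ Finset.Ico (n-β) n, fm S j '' (fm S c '' S.T) := by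
  simp only [TouchingIFS.patchR, List.replicate, List.append_nil]
  apply Set.iUnion₂_congr
  intro c _
  exact cyl_pair S j c

omit hρ in
lemma patchL0_eq (α j : ℕ) :
    S.patchL α [j] 0 = ⋃ c ∈ Finset.range α, fm S j '' (fm S c '' S.T) := by
  simp only [TouchingIFS.patchL, List.replicate, List.append_nil]
  apply Set.iUnion₂_congr
  intro c _
  exact cyl_pair S j c

lemma T2base_eq {α β j : ℕ} (hα1 : 1 ≤ α) (hαn : α ≤ n) (hβ1 : 1 ≤ β)
    (hj : j + 1 < n) :
    T2base S α β j = S.T ∩ Set.Icc (fm S j (fm S (n-β) 0)) (fm S (j+1) (fm S (α-1) 1)) := by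
  have hnb : n - β < n := by omega
  have hj' : j < n := by omega
  have ha1 : α - 1 < n := by omega
  have hT01 := T_sub hρ S
  apply Set.Subset.antisymm
  · intro z hz
    rcases hz with hz | hz
    · rw [patchR0_eq S] at hz
      simp only [Set.mem_iUnion, Finset.mem_Ico, Set.mem_image] at hz
      obtain ⟨c, ⟨hc1, hc2⟩, s, ⟨s', hs', rfl⟩, rfl⟩ := hz
      refine ⟨fmem S hj' (fmem S hc2 hs'), ?_, ?_⟩
      · apply fm_le hρ S hj'
        exact le_trans (idx0 hρ S hc1 hc2) (fm_le hρ S hc2 (hT01 hs').1)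
      · calc fm S j (fm S c s') ≤ fm S j 1 :=
              fm_le hρ S hj' (fm01 hρ S hc2 (hT01 hs')).2
          _ ≤ fm S (j+1) 0 := S.order j hj
          _ ≤ fm S (j+1) (fm S (α-1) 1) := fm_le hρ S hj (fm1_mem01 hρ S ha1).1
    · rw [patchL0_eq S] at hz
      simp only [Set.mem_iUnion, Finset.mem_range, Set.mem_image] at hz
      obtain ⟨c, hc, s, ⟨s', hs', rfl⟩, rfl⟩ := hz
      have hcn : c < n := lt_of_lt_of_le hc hαn
      refine ⟨fmem S hj (fmem S hcn hs'), ?_, ?_⟩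
      · calc fm S j (fm S (n-β) 0) ≤ fm S j 1 :=
              fm_le hρ S hj' (fm0_mem01 hρ S hnb).2
          _ ≤ fm S (j+1) 0 := S.order j hj
          _ ≤ fm S (j+1) (fm S c s') := fm_le hρ S hj (fm01 hρ S hcn (hT01 hs')).1
      · apply fm_le hρ S hj
        exact le_trans (fm_le hρ S hcn (hT01 hs').2) (idx1 hρ S (by omega) ha1)
  · rintro z ⟨hzT, hz1, hz2⟩
    rcases eq_or_lt_of_le hz1 with he | hlt1
    · left
      rw [patchR0_eq S]
      simp only [Set.mem_iUnion, Finset.mem_Ico, Set.mem_image]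
      exact ⟨n-β, ⟨le_rfl, hnb⟩, fm S (n-β) 0, ⟨0, zero_mem hρ S, rfl⟩, he⟩
    rcases eq_or_lt_of_le hz2 with he | hlt2
    · right
      rw [patchL0_eq S]
      simp only [Set.mem_iUnion, Finset.mem_range, Set.mem_image]
      exact ⟨α-1, by omega, fm S (α-1) 1, ⟨1, one_mem hρ S, rfl⟩, he.symm⟩
    have hzT' : z ∈ ⋃ e ∈ Finset.range n, affMap ρ S.t e '' S.T := by
      rw [← S.invT]; exact hzT
    simp only [Set.mem_iUnion, Finset.mem_range, Set.mem_image] at hzT'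
    obtain ⟨e, he, s₂, hs₂, hes⟩ := hzT'
    have hje : j ≤ e := by
      by_contra hcon
      push_neg at hcon
      have : z ≤ fm S j (fm S (n-β) 0) := by
        rw [← hes]
        refine le_trans (fm_le hρ S he (hT01 hs₂).2) (le_trans (chain01 hρ S hj' hcon) ?_)
        exact fm_le hρ S hj' (fm0_mem01 hρ S hnb).1
      linarith
    have hej : e ≤ j + 1 := by
      by_contra hcon
      push_neg at hcon
      have : fm S (j+1) (fm S (α-1) 1) ≤ z := by
        rw [← hes]
        refine le_trans (fm_le hρ S hj (fm1_mem01 hρ S ha1).2) ?_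
        exact le_trans (chain01 hρ S he hcon) (fm_le hρ S he (hT01 hs₂).1)
      linarith
    -- inner decomposition of s₂
    have hs₂' : s₂ ∈ ⋃ e ∈ Finset.range n, affMap ρ S.t e '' S.T := by
      rw [← S.invT]; exact hs₂
    simp only [Set.mem_iUnion, Finset.mem_range, Set.mem_image] at hs₂'
    obtain ⟨c, hc, s₃, hs₃, hcs⟩ := hs₂'
    rcases Nat.eq_or_lt_of_le hje with heq | hgt
    · -- e = j : use right tail of T_j
      subst heq
      left
      rw [patchR0_eq S]
      simp only [Set.mem_iUnion, Finset.mem_Ico, Set.mem_image]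
      have hzs : fm S (n-β) 0 < s₂ := by
        have h2 : fm S j (fm S (n-β) 0) < fm S j s₂ := by
          rw [show fm S j s₂ = z from hes]; exact hlt1
        exact (fm_strict hρ S hj').lt_iff_lt.mp h2
      have hcnb : n - β ≤ c := by
        by_contra hcon
        push_neg at hcon
        have h1 : s₂ ≤ fm S (n-β) 0 := by
          rw [← hcs]
          exact le_trans (fm_le hρ S hc (hT01 hs₃).2) (chain01 hρ S hnb hcon)
        linarith
      exact ⟨c, ⟨hcnb, hc⟩, s₂, ⟨s₃, hs₃, hcs⟩, hes⟩
    · -- e = j+1 : use left head of T_{j+1}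
      have heq : e = j + 1 := by omega
      subst heq
      right
      rw [patchL0_eq S]
      simp only [Set.mem_iUnion, Finset.mem_range, Set.mem_image]
      have hzs : s₂ < fm S (α-1) 1 := by
        have h2 : fm S (j+1) s₂ < fm S (j+1) (fm S (α-1) 1) := by
          rw [show fm S (j+1) s₂ = z from hes]; exact hlt2
        exact (fm_strict hρ S hj).lt_iff_lt.mp h2
      have hcα : c < α := by
        by_contra hcon
        push_neg at hcon
        have h1 : fm S (α-1) 1 ≤ s₂ := by
          rw [← hcs]
          exact le_trans (chain01 hρ S hc (by omega)) (fm_le hρ S hc (hT01 hs₃).1)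
        linarith
      exact ⟨c, hcα, s₂, ⟨s₃, hs₃, hcs⟩, hes⟩

end Pieces

end TstarAux
namespace TstarAux

section Sep
variable {n : ℕ} {ρ : ℕ → ℝ}
variable (hρ : ContractionVec n ρ) (S : TouchingIFS n ρ)
include hρ

lemma sepCalc {X : Set ℝ} {P Q P' Q' : ℝ} (hX : X = S.T ∩ Set.Icc P Q)
    (hPX : P ∈ X) (hP'0 : 0 ≤ P') (hP' : P' < P) (hQ' : Q < Q')
    (g1 : S.T ∩ Set.Ioo P' P = ∅) (g2 : S.T ∩ Set.Ioo Q Q' = ∅) :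
    0 < setDist X (S.T \ X) := by
  have h0T : (0:ℝ) ∈ S.T := zero_mem hρ S
  have h0X : (0:ℝ) ∉ X := by
    rw [hX]; rintro ⟨-, h1, -⟩; linarith
  set ε := min (P - P') (Q' - Q) with hε
  have hεpos : 0 < ε := lt_min (by linarith) (by linarith)
  have hne : (Set.image2 dist X (S.T \ X)).Nonempty :=
    ⟨dist P 0, Set.mem_image2_of_mem hPX ⟨h0T, h0X⟩⟩
  have hle : ∀ d ∈ Set.image2 dist X (S.T \ X), ε ≤ d := by
    rintro d ⟨x, hx, y, hy, rfl⟩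
    have hxI : P ≤ x ∧ x ≤ Q := by rw [hX] at hx; exact hx.2
    have hyT : y ∈ S.T := hy.1
    have hy' : y ≤ P' ∨ Q' ≤ y := by
      by_contra hcon
      push_neg at hcon
      obtain ⟨hc1, hc2⟩ := hcon
      rcases lt_or_ge y P with h | h
      · have : y ∈ S.T ∩ Set.Ioo P' P := ⟨hyT, hc1, h⟩
        rw [g1] at this; exact this
      rcases le_or_gt y Q with h2 | h2
      · exact hy.2 (by rw [hX]; exact ⟨hyT, h, h2⟩)
      · have : y ∈ S.T ∩ Set.Ioo Q Q' := ⟨hyT, h2, hc2⟩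
        rw [g2] at this; exact this
    rw [Real.dist_eq]
    rcases hy' with h | h
    · apply le_abs.mpr; left; simp only [hε]
      have := min_le_left (P - P') (Q' - Q)
      linarith
    · apply le_abs.mpr; right; simp only [hε]
      have := min_le_right (P - P') (Q' - Q)
      linarith
  exact lt_of_lt_of_le hεpos (le_csInf hne hle)

omit hρ in
lemma piece_T2 {α β : ℕ} {w : List ℕ} (hw : ∀ c ∈ w, c < n) {j : ℕ} (hj : S.touch j) :
    Piece S α β (Ψw S w '' T2base S α β j) := by
  intro p hp
  right
  refine ⟨p ++ w, j, ?_, hj, ?_⟩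
  · intro c hc; rcases List.mem_append.mp hc with h | h; exacts [hp c h, hw c h]
  · rw [affWord_append, Set.image_comp]; rfl

lemma piece_T1 {α β : ℕ} {w : List ℕ} (hw : ∀ c ∈ w, c < n) {a b : ℕ} (hab : a ≤ b)
    (hb : b < n)
    (h1 : ∀ i, a ≤ i → i < b → S.touch i) (h2 : a = 0 ∨ ¬ S.touch (a-1))
    (h3 : b = n-1 ∨ ¬ S.touch b)
    {x' y' : ℝ} (hx'0 : 0 ≤ x') (hx' : x' < Ψw S w (fm S a 0))
    (gapL : S.T ∩ Set.Ioo x' (Ψw S w (fm S a 0)) = ∅)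
    (hy' : Ψw S w (fm S b 1) < y') (hy'1 : y' ≤ 1)
    (gapR : S.T ∩ Set.Ioo (Ψw S w (fm S b 1)) y' = ∅) :
    Piece S α β (Ψw S w '' T1base S a b) := by
  intro p hp
  left
  have hpw : ∀ c ∈ p ++ w, c < n := by
    intro c hc; rcases List.mem_append.mp hc with h | h; exacts [hp c h, hw c h]
  have ha : a < n := lt_of_le_of_lt hab hb
  have hbase : T1base S a b = S.T ∩ Set.Icc (fm S a 0) (fm S b 1) := T1base_eq hρ S hab hb
  have hPmem : fm S a 0 ∈ T1base S a b := fa0_mem_T1base hρ S hab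
  have hQmem : fm S b 1 ∈ T1base S a b := fb1_mem_T1base hρ S hab
  have hP01 := fm0_mem01 hρ S ha
  have hQ01 := fm1_mem01 hρ S hb
  have hXeq : affWord ρ S.t p '' (Ψw S w '' T1base S a b)
      = Ψw S (p ++ w) '' T1base S a b := by
    show _ = affWord ρ S.t (p ++ w) '' T1base S a b
    rw [affWord_append, Set.image_comp]
  have hIcc : Ψw S (p ++ w) '' T1base S a b
      = S.T ∩ Set.Icc (Ψw S (p++w) (fm S a 0)) (Ψw S (p++w) (fm S b 1)) :=
    transIcc hρ S hpw hbase hPmem hQmem hP01.1 hQ01.2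
  refine ⟨p ++ w, a, b, hpw, ⟨hab, hb, h1, h2, h3⟩, ?_, ?_⟩
  · rw [hXeq]; rfl
  · rw [hXeq]
    have hwa01 : Ψw S w (fm S a 0) ∈ Set.Icc (0:ℝ) 1 := Ψw01 hρ S hw hP01
    have hwb01 : Ψw S w (fm S b 1) ∈ Set.Icc (0:ℝ) 1 := Ψw01 hρ S hw hQ01
    have hx'1 : x' ≤ 1 := le_trans (le_of_lt hx') hwa01.2
    have hy'0 : 0 ≤ y' := le_trans hwb01.1 (le_of_lt hy')
    refine sepCalc hρ S hIcc ?_ (P' := Ψw S p x') (Q' := Ψw S p y') ?_ ?_ ?_ ?_ ?_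
    · exact Set.mem_image_of_mem _ hPmem
    · exact (Ψw01 hρ S hp ⟨hx'0, hx'1⟩).1
    · rw [Ψw_append_apply]; exact Ψw_strict hρ S hp hx'
    · rw [Ψw_append_apply]; exact Ψw_strict hρ S hp hy'
    · have := gapTrans hρ S hp hx'0 hwa01.2 gapL
      rwa [Ψw_append_apply]
    · have := gapTrans hρ S hp hwb01.1 hy'1 gapR
      rwa [Ψw_append_apply]

end Sep

end TstarAux
namespace TstarAux

variable {n : ℕ} {ρ : ℕ → ℝ}

/-- A chain of pieces `(P, Q, X)` covering `T ∩ (A, B]` with `T`-free gaps in between. -/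
def ChainCov (S : TouchingIFS n ρ) : ℝ → List (ℝ × ℝ × Set ℝ) → ℝ → Prop
  | A, [], B => A = B ∧ 0 ≤ A ∧ A ≤ 1
  | A, e :: l, B => 0 ≤ A ∧ A < e.1 ∧ S.T ∩ Set.Ioo A e.1 = ∅ ∧ e.1 ∈ S.T ∧ e.2.1 ∈ S.T ∧
      e.1 ≤ e.2.1 ∧ e.2.2 = S.T ∩ Set.Icc e.1 e.2.1 ∧ ChainCov S e.2.1 l B

section CC
variable (hρ : ContractionVec n ρ) (S : TouchingIFS n ρ)
include hρ

lemma cc_le : ∀ (l : List (ℝ × ℝ × Set ℝ)) (A B : ℝ), ChainCov S A l B →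
    A ≤ B ∧ 0 ≤ A ∧ B ≤ 1 := by
  intro l
  induction l with
  | nil =>
    intro A B h
    obtain ⟨h1, h2, h3⟩ := h
    exact ⟨le_of_eq h1, h2, h1 ▸ h3⟩
  | cons e l ih =>
    intro A B h
    obtain ⟨h0, h1, h2, h3, h4, h5, h6, h7⟩ := h
    obtain ⟨i1, i2, i3⟩ := ih e.2.1 B h7
    exact ⟨by linarith, h0, i3⟩

lemma cc_append : ∀ (l₁ l₂ : List (ℝ × ℝ × Set ℝ)) (A M B : ℝ),
    ChainCov S A l₁ M → ChainCov S M l₂ B → ChainCov S A (l₁ ++ l₂) B := by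
  intro l₁
  induction l₁ with
  | nil =>
    intro l₂ A M B h1 h2
    obtain ⟨rfl, -, -⟩ := h1
    simpa using h2
  | cons e l ih =>
    intro l₂ A M B h1 h2
    obtain ⟨h0, ha, hb, hc, hd, he, hf, hg⟩ := h1
    exact ⟨h0, ha, hb, hc, hd, he, hf, ih l₂ e.2.1 M B hg h2⟩

lemma cc_subset : ∀ (l : List (ℝ × ℝ × Set ℝ)) (A B : ℝ), ChainCov S A l B →
    ∀ e ∈ l, e.2.2 ⊆ S.T ∩ Set.Ioc A B := by
  intro l
  induction l with
  | nil => intro A B _ e he; exact absurd he List.not_mem_nil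
  | cons e₀ l ih =>
    intro A B h e he
    obtain ⟨h0, h1, h2, h3, h4, h5, h6, h7⟩ := h
    obtain ⟨i1, i2, i3⟩ := cc_le hρ S l e₀.2.1 B h7
    rcases List.mem_cons.mp he with rfl | hmem
    · intro z hz
      rw [h6] at hz
      exact ⟨hz.1, lt_of_lt_of_le h1 hz.2.1, le_trans hz.2.2 i1⟩
    · intro z hz
      have := ih e₀.2.1 B h7 e hmem hz
      exact ⟨this.1, lt_of_lt_of_le (lt_of_lt_of_le h1 h5) (le_of_lt this.2.1), this.2.2⟩

lemma cc_cover : ∀ (l : List (ℝ × ℝ × Set ℝ)) (A B : ℝ), ChainCov S A l B →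
    ∀ z ∈ S.T, A < z → z ≤ B → ∃ e ∈ l, z ∈ e.2.2 := by
  intro l
  induction l with
  | nil =>
    intro A B h z hzT h1 h2
    obtain ⟨rfl, -, -⟩ := h
    linarith
  | cons e₀ l ih =>
    intro A B h z hzT h1 h2
    obtain ⟨h0, ha, hb, hc, hd, he, hf, hg⟩ := h
    rcases le_or_gt z e₀.2.1 with hz | hz
    · have hP : e₀.1 ≤ z := by
        by_contra hcon
        push_neg at hcon
        have : z ∈ S.T ∩ Set.Ioo A e₀.1 := ⟨hzT, h1, hcon⟩
        rw [hb] at this; exact this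
      exact ⟨e₀, List.mem_cons_self, by rw [hf]; exact ⟨hzT, hP, hz⟩⟩
    · obtain ⟨e, hel, hez⟩ := ih e₀.2.1 B hg z hzT hz h2
      exact ⟨e, List.mem_cons_of_mem _ hel, hez⟩

lemma cc_pairwise : ∀ (l : List (ℝ × ℝ × Set ℝ)) (A B : ℝ), ChainCov S A l B →
    l.Pairwise (fun e e' => e.2.2 ∩ e'.2.2 = ∅) := by
  intro l
  induction l with
  | nil => intro A B _; exact List.Pairwise.nil
  | cons e₀ l ih =>
    intro A B h
    obtain ⟨h0, ha, hb, hc, hd, he, hf, hg⟩ := h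
    refine List.Pairwise.cons ?_ (ih e₀.2.1 B hg)
    intro e' he'
    apply Set.eq_empty_iff_forall_notMem.mpr
    rintro z ⟨hz1, hz2⟩
    have hle : z ≤ e₀.2.1 := by rw [hf] at hz1; exact hz1.2.2
    have hgt : e₀.2.1 < z := (cc_subset hρ S l e₀.2.1 B hg e' he' hz2).2.1
    linarith

lemma cc_map {p : List ℕ} (hp : ∀ c ∈ p, c < n) :
    ∀ (l : List (ℝ × ℝ × Set ℝ)) (A B : ℝ), ChainCov S A l B →
    ChainCov S (Ψw S p A) (l.map (fun e => (Ψw S p e.1, Ψw S p e.2.1, Ψw S p '' e.2.2)))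
      (Ψw S p B) := by
  intro l
  induction l with
  | nil =>
    intro A B h
    obtain ⟨rfl, h2, h3⟩ := h
    exact ⟨rfl, (Ψw01 hρ S hp ⟨h2, h3⟩).1, (Ψw01 hρ S hp ⟨h2, h3⟩).2⟩
  | cons e₀ l ih =>
    intro A B h
    obtain ⟨h0, ha, hb, hc, hd, he, hf, hg⟩ := h
    have hT01 := T_sub hρ S
    have hP01 : e₀.1 ∈ Set.Icc (0:ℝ) 1 := hT01 hc
    have hQ01 : e₀.2.1 ∈ Set.Icc (0:ℝ) 1 := hT01 hd
    have hA01 : A ∈ Set.Icc (0:ℝ) 1 := ⟨h0, le_trans (le_of_lt ha) hP01.2⟩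
    refine ⟨(Ψw01 hρ S hp hA01).1, Ψw_strict hρ S hp ha,
      gapTrans hρ S hp hA01.1 hP01.2 hb, Ψw_mem_T S hp hc, Ψw_mem_T S hp hd,
      Ψw_mono hρ S hp he, ?_, ih e₀.2.1 B hg⟩
    exact transIcc hρ S hp hf (by rw [hf]; exact ⟨hc, le_rfl, he⟩)
      (by rw [hf]; exact ⟨hd, he, le_rfl⟩) hP01.1 hQ01.2

end CC

end TstarAux
namespace TstarAux

variable {n : ℕ} {ρ : ℕ → ℝ}

open Classical in
/-- End of the maximal touching run starting at `a`, capped at `m`. -/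
noncomputable def runEnd (S : TouchingIFS n ρ) (m : ℕ) (a : ℕ) : ℕ :=
  if h : a < m ∧ S.touch a then runEnd S m (a+1) else a
termination_by m - a
decreasing_by
  have := h.1; omega

lemma runEnd_spec (S : TouchingIFS n ρ) (m : ℕ) :
    ∀ k a, m - a ≤ k →
      a ≤ runEnd S m a ∧ (a ≤ m → runEnd S m a ≤ m) ∧
      (∀ i, a ≤ i → i < runEnd S m a → S.touch i) ∧
      (a ≤ m → (runEnd S m a = m ∨ ¬ S.touch (runEnd S m a))) := by
  intro k
  induction k with
  | zero =>
    intro a hk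
    rw [runEnd, dif_neg (by omega : ¬(a < m ∧ S.touch a))]
    exact ⟨le_rfl, fun h => h, fun i h1 h2 => absurd h2 (by omega),
      fun h => Or.inl (by omega)⟩
  | succ k ih =>
    intro a hk
    rw [runEnd]
    by_cases hc : a < m ∧ S.touch a
    · rw [dif_pos hc]
      obtain ⟨i1, i2, i3, i4⟩ := ih (a+1) (by omega)
      refine ⟨by omega, fun _ => i2 (by omega), ?_, fun _ => i4 (by omega)⟩
      intro i h1 h2
      rcases Nat.eq_or_lt_of_le h1 with rfl | h
      · exact hc.2
      · exact i3 i h h2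
    · rw [dif_neg hc]
      refine ⟨le_rfl, fun h => h, fun i h1 h2 => absurd h2 (by omega), ?_⟩
      intro ham
      rcases Nat.eq_or_lt_of_le ham with heq | hlt
      · exact Or.inl heq
      · exact Or.inr (fun ht => hc ⟨hlt, ht⟩)

lemma runEnd_ge (S : TouchingIFS n ρ) (m a : ℕ) : a ≤ runEnd S m a :=
  (runEnd_spec S m (m - a) a le_rfl).1

lemma runEnd_le (S : TouchingIFS n ρ) {m a : ℕ} (h : a ≤ m) : runEnd S m a ≤ m :=
  (runEnd_spec S m (m - a) a le_rfl).2.1 h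

lemma runEnd_touch (S : TouchingIFS n ρ) (m a : ℕ) :
    ∀ i, a ≤ i → i < runEnd S m a → S.touch i :=
  (runEnd_spec S m (m - a) a le_rfl).2.2.1

lemma runEnd_stop (S : TouchingIFS n ρ) {m a : ℕ} (h : a ≤ m) :
    runEnd S m a = m ∨ ¬ S.touch (runEnd S m a) :=
  (runEnd_spec S m (m - a) a le_rfl).2.2.2 h

open Classical in
/-- The list of maximal touching runs covering letters `a,…,m`. -/
noncomputable def runsFrom (S : TouchingIFS n ρ) (m : ℕ) (a : ℕ) : List (ℕ × ℕ) :=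
  if h : a ≤ m then (a, runEnd S m a) :: runsFrom S m (runEnd S m a + 1) else []
termination_by m + 1 - a
decreasing_by
  have := runEnd_ge S m a; omega

lemma runsFrom_neg (S : TouchingIFS n ρ) {m a : ℕ} (h : ¬ a ≤ m) : runsFrom S m a = [] := by
  rw [runsFrom, dif_neg h]

lemma runsFrom_pos (S : TouchingIFS n ρ) {m a : ℕ} (h : a ≤ m) :
    runsFrom S m a = (a, runEnd S m a) :: runsFrom S m (runEnd S m a + 1) := by
  rw [runsFrom, dif_pos h]

lemma runsFrom_ne_nil (S : TouchingIFS n ρ) {m a : ℕ} (h : a ≤ m) :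
    runsFrom S m a ≠ [] := by
  rw [runsFrom_pos S h]; simp

lemma runsFrom_mem (S : TouchingIFS n ρ) (m : ℕ) :
    ∀ k a, m + 1 - a ≤ k → ∀ p ∈ runsFrom S m a,
      a ≤ p.1 ∧ p.1 ≤ p.2 ∧ p.2 ≤ m ∧ (∀ i, p.1 ≤ i → i < p.2 → S.touch i) ∧
      (p.1 = a ∨ ¬ S.touch (p.1 - 1)) ∧ (p.2 = m ∨ ¬ S.touch p.2) := by
  intro k
  induction k with
  | zero =>
    intro a hk p hp
    rw [runsFrom_neg S (by omega)] at hp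
    exact absurd hp List.not_mem_nil
  | succ k ih =>
    intro a hk p hp
    by_cases ham : a ≤ m
    swap
    · rw [runsFrom_neg S ham] at hp
      exact absurd hp List.not_mem_nil
    rw [runsFrom_pos S ham] at hp
    have hge := runEnd_ge S m a
    have hle := runEnd_le S (m := m) (a := a) ham
    rcases List.mem_cons.mp hp with rfl | hmem
    · exact ⟨le_rfl, hge, hle, runEnd_touch S m a, Or.inl rfl, runEnd_stop S ham⟩
    · have := ih (runEnd S m a + 1) (by omega) p hmem
      obtain ⟨j1, j2, j3, j4, j5, j6⟩ := this
      refine ⟨by omega, j2, j3, j4, ?_, j6⟩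
      rcases j5 with heq | hnt
      · right
        have hlt : runEnd S m a < m := by omega
        rcases runEnd_stop S ham with h | h
        · omega
        · rw [heq]
          simpa using h
      · exact Or.inr hnt

lemma runsFrom_cover (S : TouchingIFS n ρ) (m : ℕ) :
    ∀ k a, m + 1 - a ≤ k → ∀ c, a ≤ c → c ≤ m →
      ∃ p ∈ runsFrom S m a, p.1 ≤ c ∧ c ≤ p.2 := by
  intro k
  induction k with
  | zero => intro a hk c h1 h2; omega
  | succ k ih =>
    intro a hk c h1 h2
    have ham : a ≤ m := le_trans h1 h2
    rw [runsFrom_pos S ham]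
    rcases le_or_gt c (runEnd S m a) with h | h
    · exact ⟨(a, runEnd S m a), List.mem_cons_self, h1, h⟩
    · have hge := runEnd_ge S m a
      obtain ⟨p, hp, hpc⟩ := ih (runEnd S m a + 1) (by omega) c (by omega) h2
      exact ⟨p, List.mem_cons_of_mem _ hp, hpc⟩

lemma runsFrom_two (S : TouchingIFS n ρ) {m a j₀ : ℕ} (h1 : a ≤ m) (hj1 : a ≤ j₀)
    (hj2 : j₀ < m) (hnt : ¬ S.touch j₀) : 2 ≤ (runsFrom S m a).length := by
  by_contra hcon
  push_neg at hcon
  obtain ⟨pa, hpa, hpa1, hpa2⟩ :=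
    runsFrom_cover S m (m + 1 - a) a le_rfl a le_rfl h1
  obtain ⟨pm, hpm, hpm1, hpm2⟩ :=
    runsFrom_cover S m (m + 1 - a) a le_rfl m h1 le_rfl
  have hpam : pa = pm := by
    rcases hl : runsFrom S m a with _ | ⟨q, l⟩
    · rw [hl] at hpa; exact absurd hpa List.not_mem_nil
    · have : l = [] := by
        rw [hl] at hcon
        simp only [List.length_cons] at hcon
        exact List.eq_nil_of_length_eq_zero (by omega)
      subst this
      rw [hl] at hpa hpm
      simp only [List.mem_singleton] at hpa hpm
      rw [hpa, hpm]
  subst hpam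
  have hspec := runsFrom_mem S m (m + 1 - a) a le_rfl pa hpa
  have : S.touch j₀ := hspec.2.2.2.1 j₀ (by omega) (by omega)
  exact hnt this

end TstarAux
namespace TstarAux

section RunChain
variable {n : ℕ} {ρ : ℕ → ℝ}
variable (hρ : ContractionVec n ρ) (S : TouchingIFS n ρ)
include hρ

omit hρ in
lemma listj_valid {j : ℕ} (hj : j < n) : ∀ c ∈ [j], c < n := by simpa

lemma runChain {j m : ℕ} (hj : j < n) (hm : m < n) :
    ∀ k a, m + 1 - a ≤ k → 1 ≤ a → a ≤ m → ¬ S.touch (a-1) →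
    ChainCov S (fm S j (fm S (a-1) 1))
      ((runsFrom S m a).map (fun r => (fm S j (fm S r.1 0), fm S j (fm S r.2 1),
        Ψw S [j] '' T1base S r.1 r.2)))
      (fm S j (fm S m 1)) := by
  intro k
  induction k with
  | zero => intro a hk ha1 ham hnt; omega
  | succ k ih =>
    intro a hk ha1 ham hnt
    rw [runsFrom_pos S ham]
    set E := runEnd S m a with hE
    have hgeE := runEnd_ge S m a
    have hleE := runEnd_le S ham
    have hEn : E < n := by omega
    have han : a < n := by omega
    have ha1n : a - 1 + 1 = a := by omega
    have hlt0 : fm S (a-1) 1 < fm S a 0 := by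
      have := ntlt S (i := a-1) (by omega) hnt
      rwa [ha1n] at this
    simp only [List.map_cons]
    refine ⟨?_, ?_, ?_, ?_, ?_, ?_, ?_, ?_⟩
    · exact (fm01 hρ S hj (fm1_mem01 hρ S (by omega))).1
    · exact fm_strict hρ S hj hlt0
    · have := junction_gapW hρ S (listj_valid hj) (i := a-1) (by omega)
      rw [ha1n] at this
      exact this
    · exact fmem S hj (fmem S han (zero_mem hρ S))
    · exact fmem S hj (fmem S hEn (one_mem hρ S))
    · apply fm_le hρ S hj
      exact le_trans (fm_le hρ S han zero_le_one) (idx1 hρ S hgeE hEn)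
    · exact transIcc hρ S (listj_valid hj) (T1base_eq hρ S hgeE hEn)
        (fa0_mem_T1base hρ S hgeE) (fb1_mem_T1base hρ S hgeE)
        (fm0_mem01 hρ S han).1 (fm1_mem01 hρ S hEn).2
    · rcases Nat.eq_or_lt_of_le hleE with heq | hlt
      · rw [runsFrom_neg S (by omega : ¬ E + 1 ≤ m)]
        simp only [List.map_nil]
        rw [hE, heq]
        exact ⟨rfl, (fm01 hρ S hj (fm1_mem01 hρ S hm)).1,
          (fm01 hρ S hj (fm1_mem01 hρ S hm)).2⟩
      · have hntE : ¬ S.touch E := by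
          rcases runEnd_stop S ham with h | h
          · omega
          · exact h
        have hrec := ih (E+1) (by omega) (by omega) (by omega)
          (by simpa using hntE)
        simpa using hrec

lemma runPieces {α β j m a₀ : ℕ} (hj : j < n) (hm : m < n) (ha₀1 : 1 ≤ a₀)
    (hnt₀ : ¬ S.touch (a₀-1))
    (hend : (m = n - 1 ∧ j + 1 < n ∧ ¬ S.touch j) ∨ (m + 1 < n ∧ ¬ S.touch m)) :
    ∀ p ∈ runsFrom S m a₀, Piece S α β (Ψw S [j] '' T1base S p.1 p.2) := by
  intro p hp
  obtain ⟨j1, j2, j3, j4, j5, j6⟩ := runsFrom_mem S m (m + 1 - a₀) a₀ le_rfl p hp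
  set a := p.1
  set b := p.2
  have ha1 : 1 ≤ a := le_trans ha₀1 j1
  have han : a < n := by omega
  have hbn : b < n := by omega
  have ha1n : a - 1 + 1 = a := by omega
  have hnta : ¬ S.touch (a-1) := by
    rcases j5 with heq | h
    · rw [heq]; exact hnt₀
    · exact h
  have hlt0 : fm S (a-1) 1 < fm S a 0 := by
    have := ntlt S (i := a-1) (by omega) hnta
    rwa [ha1n] at this
  have gapL : S.T ∩ Set.Ioo (fm S j (fm S (a-1) 1)) (Ψw S [j] (fm S a 0)) = ∅ := by
    have := junction_gapW hρ S (listj_valid hj) (i := a-1) (by omega)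
    rw [ha1n] at this
    exact this
  have hx'0 : (0:ℝ) ≤ fm S j (fm S (a-1) 1) := (fm01 hρ S hj (fm1_mem01 hρ S (by omega))).1
  have hx' : fm S j (fm S (a-1) 1) < Ψw S [j] (fm S a 0) := fm_strict hρ S hj hlt0
  -- right side
  by_cases hbtop : b = n - 1
  · -- top case : right gap one level up
    obtain ⟨hm1, hj1, hjnt⟩ : m = n - 1 ∧ j + 1 < n ∧ ¬ S.touch j := by
      rcases hend with h | h
      · exact h
      · exfalso; omega
    have hb1 : fm S b 1 = 1 := by rw [hbtop]; exact S.right1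
    have hQ : Ψw S [j] (fm S b 1) = fm S j 1 := by
      show fm S j (fm S b 1) = fm S j 1
      rw [hb1]
    have gapR : S.T ∩ Set.Ioo (Ψw S [j] (fm S b 1)) (fm S (j+1) 0) = ∅ := by
      rw [hQ]
      exact junction_gap hρ S hj1
    have hy' : Ψw S [j] (fm S b 1) < fm S (j+1) 0 := by
      rw [hQ]
      exact ntlt S hj1 hjnt
    exact piece_T1 hρ S (listj_valid hj) j2 hbn j4 (Or.inr hnta) (Or.inl hbtop)
      hx'0 hx' gapL hy' (fm0_mem01 hρ S (by omega)).2 gapR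
  · -- inner case
    have hbnt : ¬ S.touch b := by
      rcases j6 with heq | h
      · rcases hend with hcase | hcase
        · exact absurd (heq.trans hcase.1) hbtop
        · rw [heq]; exact hcase.2
      · exact h
    have hb1n : b + 1 < n := by omega
    have gapR : S.T ∩ Set.Ioo (Ψw S [j] (fm S b 1)) (fm S j (fm S (b+1) 0)) = ∅ :=
      junction_gapW hρ S (listj_valid hj) hb1n
    have hy' : Ψw S [j] (fm S b 1) < fm S j (fm S (b+1) 0) :=
      fm_strict hρ S hj (ntlt S hb1n hbnt)
    exact piece_T1 hρ S (listj_valid hj) j2 hbn j4 (Or.inr hnta) (Or.inr hbnt)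
      hx'0 hx' gapL hy' (fm01 hρ S hj (fm0_mem01 hρ S (by omega))).2 gapR

end RunChain

end TstarAux
namespace TstarAux

section BaseND
variable {n : ℕ} {ρ : ℕ → ℝ}
variable (hρ : ContractionVec n ρ) (S : TouchingIFS n ρ) (α β : ℕ)
include hρ

lemma alpha_le_nb (hα : S.alphaRun α) (hβ : S.betaRun β) : α ≤ n - β := by
  by_contra hcon
  push_neg at hcon
  obtain ⟨hβ1, hβn, -, hβnt⟩ := hβ
  obtain ⟨hα1, hαn, hαt, -⟩ := hα
  exact hβnt (hαt (n - β - 1) (by omega))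

lemma baseND_spec (hα : S.alphaRun α) (hβ : S.betaRun β)
    (hndeg : 2 ≤ α ∨ ∃ j₀, α ≤ j₀ ∧ j₀ < n - 1 ∧ ¬ S.touch j₀) :
    ∃ L : List (ℝ × ℝ × Set ℝ),
      ChainCov S (fm S 0 (fm S (α-1) 1)) L (fm S (α-1) 1) ∧ 2 ≤ L.length ∧
      ∀ e ∈ L, Piece S α β e.2.2 := by
  obtain ⟨hα1, hαn, hαt, hαnt⟩ := hα
  obtain ⟨hβ1, hβn, hβt, hβnt⟩ := hβ
  have hn3 := hρ.three_le
  have hanb : α ≤ n - β := alpha_le_nb hρ S α β ⟨hα1, hαn, hαt, hαnt⟩ ⟨hβ1, hβn, hβt, hβnt⟩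
  have hr1 : fm S (n-1) 1 = 1 := S.right1
  -- the pieces
  set mid : ℕ → List (ℝ × ℝ × Set ℝ) := fun j =>
    (runsFrom S (n-β-1) α).map (fun r => (fm S j (fm S r.1 0), fm S j (fm S r.2 1),
      Ψw S [j] '' T1base S r.1 r.2)) with hmid
  set Upc : ℕ → (ℝ × ℝ × Set ℝ) := fun j =>
    (fm S j (fm S (n-β) 0), fm S (j+1) (fm S (α-1) 1), T2base S α β j) with hUpc
  set L3 : List (ℝ × ℝ × Set ℝ) :=
    (runsFrom S (n-1) α).map (fun r => (fm S (α-1) (fm S r.1 0), fm S (α-1) (fm S r.2 1),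
      Ψw S [α-1] '' T1base S r.1 r.2)) with hL3
  set blocks : ℕ → List (ℝ × ℝ × Set ℝ) := fun c =>
    (List.range c).flatMap (fun j => mid j ++ [Upc j]) with hblocks
  -- single block chain
  have blockChain : ∀ j, j < α - 1 →
      ChainCov S (fm S j (fm S (α-1) 1)) (mid j ++ [Upc j]) (fm S (j+1) (fm S (α-1) 1)) := by
    intro j hj
    have hjn : j < n := by omega
    have hj1n : j + 1 < n := by omega
    have hnb1 : n - β - 1 + 1 = n - β := by omega
    have hmidchain : ChainCov S (fm S j (fm S (α-1) 1)) (mid j)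
        (fm S j (fm S (n-β-1) 1)) := by
      by_cases hcase : α ≤ n - β - 1
      · exact runChain hρ S hjn (by omega) (n - β - 1 + 1 - α) α le_rfl hα1 hcase hαnt
      · have heq : n - β - 1 = α - 1 := by omega
        have hempty : runsFrom S (n-β-1) α = [] := runsFrom_neg S hcase
        rw [hmid]
        simp only [hempty, List.map_nil]
        rw [heq]
        exact ⟨rfl, (fm01 hρ S hjn (fm1_mem01 hρ S (by omega))).1,
          (fm01 hρ S hjn (fm1_mem01 hρ S (by omega))).2⟩
    have hUchain : ChainCov S (fm S j (fm S (n-β-1) 1)) [Upc j]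
        (fm S (j+1) (fm S (α-1) 1)) := by
      have hQT : fm S (j+1) (fm S (α-1) 1) ∈ S.T :=
        fmem S hj1n (fmem S (by omega) (one_mem hρ S))
      have hlt : fm S (n-β-1) 1 < fm S (n-β) 0 := by
        have := ntlt S (i := n - β - 1) (by omega) hβnt
        rwa [hnb1] at this
      refine ⟨(fm01 hρ S hjn (fm1_mem01 hρ S (by omega))).1,
        fm_strict hρ S hjn hlt, ?_,
        fmem S hjn (fmem S (by omega) (zero_mem hρ S)), hQT, ?_, ?_, ?_⟩
      · have := junction_gapW hρ S (listj_valid hjn) (i := n - β - 1) (by omega)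
        rw [hnb1] at this
        exact this
      · calc fm S j (fm S (n-β) 0) ≤ fm S j 1 :=
              fm_le hρ S hjn (fm0_mem01 hρ S (by omega)).2
          _ ≤ fm S (j+1) 0 := S.order j hj1n
          _ ≤ fm S (j+1) (fm S (α-1) 1) := fm_le hρ S hj1n (fm1_mem01 hρ S (by omega)).1
      · exact T2base_eq hρ S hα1 (by omega) hβ1 hj1n
      · exact ⟨rfl, (T_sub hρ S hQT).1, (T_sub hρ S hQT).2⟩
    exact cc_append hρ S (mid j) [Upc j] _ _ _ hmidchain hUchain
  -- blocks chain by induction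
  have blocksChain : ∀ c, c ≤ α - 1 →
      ChainCov S (fm S 0 (fm S (α-1) 1)) (blocks c) (fm S c (fm S (α-1) 1)) := by
    intro c
    induction c with
    | zero =>
      intro _
      rw [hblocks]
      simp only [List.range_zero, List.flatMap_nil]
      exact ⟨rfl, (fm01 hρ S (by omega) (fm1_mem01 hρ S (by omega))).1,
        (fm01 hρ S (by omega) (fm1_mem01 hρ S (by omega))).2⟩
    | succ c ih =>
      intro hc
      have h1 := ih (by omega)
      have h2 := blockChain c (by omega)
      simp only [hblocks, List.range_succ, List.flatMap_append, List.flatMap_cons,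
        List.flatMap_nil, List.append_nil]
      exact cc_append hρ S _ _ _ _ _ h1 h2
  -- L3 chain
  have hL3chain : ChainCov S (fm S (α-1) (fm S (α-1) 1)) L3 (fm S (α-1) 1) := by
    have := runChain hρ S (j := α - 1) (m := n-1) (by omega) (by omega)
      (n - 1 + 1 - α) α le_rfl hα1 (by omega) hαnt
    rwa [hr1] at this
  have hchain : ChainCov S (fm S 0 (fm S (α-1) 1)) (blocks (α-1) ++ L3) (fm S (α-1) 1) :=
    cc_append hρ S _ _ _ _ _ (blocksChain (α-1) le_rfl) hL3chain
  refine ⟨blocks (α-1) ++ L3, hchain, ?_, ?_⟩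
  · -- length
    have hL3ne : L3 ≠ [] := by
      rw [hL3]
      simp only [ne_eq, List.map_eq_nil_iff]
      exact runsFrom_ne_nil S (by omega)
    have hL3len : 1 ≤ L3.length := List.length_pos_iff.mpr hL3ne
    rcases hndeg with h2α | ⟨j₀, hj₀1, hj₀2, hj₀3⟩
    · have hUmem : Upc 0 ∈ blocks (α-1) := by
        rw [hblocks]
        apply List.mem_flatMap.mpr
        exact ⟨0, List.mem_range.mpr (by omega), List.mem_append_right _ (List.mem_singleton.mpr rfl)⟩
      have : 1 ≤ (blocks (α-1)).length := List.length_pos_iff.mpr (List.ne_nil_of_mem hUmem)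
      rw [List.length_append]
      omega
    · have : 2 ≤ L3.length := by
        rw [hL3, List.length_map]
        exact runsFrom_two S (by omega) hj₀1 (by omega) hj₀3
      rw [List.length_append]
      omega
  · -- pieces
    intro e he
    rcases List.mem_append.mp he with hbl | hl3
    · rw [hblocks] at hbl
      obtain ⟨j, hjr, hjmem⟩ := List.mem_flatMap.mp hbl
      have hjα : j < α - 1 := List.mem_range.mp hjr
      rcases List.mem_append.mp hjmem with hmm | hup
      · rw [hmid] at hmm
        obtain ⟨r, hr, rfl⟩ := List.mem_map.mp hmm
        exact runPieces hρ S (by omega) (by omega) hα1 hαnt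
          (Or.inr ⟨by omega, hβnt⟩) r hr
      · rw [List.mem_singleton.mp hup, hUpc]
        intro p hp
        right
        exact ⟨p, j, hp, hαt j (by omega), rfl⟩
    · rw [hL3] at hl3
      obtain ⟨r, hr, rfl⟩ := List.mem_map.mp hl3
      refine runPieces hρ S (by omega) (by omega) hα1 hαnt (Or.inl ⟨rfl, by omega, hαnt⟩) r hr

end BaseND

end TstarAux
namespace TstarAux

section BaseD
variable {n : ℕ} {ρ : ℕ → ℝ}
variable (hρ : ContractionVec n ρ) (S : TouchingIFS n ρ) (α β : ℕ)
include hρ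

lemma baseD_spec (hα : S.alphaRun α) (hβ : S.betaRun β)
    (hdeg : α = 1 ∧ ∀ i, 1 ≤ i → i + 1 < n → S.touch i) :
    ∃ L : List (ℝ × ℝ × Set ℝ),
      ChainCov S (fm S 0 (fm S (α-1) 1)) L (fm S (α-1) 1) ∧ 2 ≤ L.length ∧
      ∀ e ∈ L, Piece S α β e.2.2 := by
  obtain ⟨hα1, hdegt⟩ := hdeg
  subst hα1
  obtain ⟨-, -, -, hαnt⟩ := hα
  have hnt0 : ¬ S.touch 0 := hαnt
  have hn3 := hρ.three_le
  have hβval : β = n - 1 := by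
    obtain ⟨hβ1, hβn, hβt, hβnt⟩ := hβ
    by_contra hcon
    exact hβnt (hdegt (n - β - 1) (by omega) (by omega))
  subst hβval
  have hr1 : fm S (n-1) 1 = 1 := S.right1
  have h00 : fm S 0 0 = 0 := S.left0
  have hnb1 : n - (n - 1) = 1 := by omega
  have h0n : (0:ℕ) < n := by omega
  have h1n : 1 < n := by omega
  have hn1n : n - 1 < n := by omega
  -- pieces
  set eA : ℝ × ℝ × Set ℝ :=
    (fm S 0 (fm S 1 0), fm S 0 (fm S 1 (fm S 0 1)), Ψw S [0, 1] '' T1base S 0 0) with heA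
  set eU : ℕ → (ℝ × ℝ × Set ℝ) := fun j =>
    (fm S 0 (fm S j (fm S 1 0)), fm S 0 (fm S (j+1) (fm S 0 1)),
      Ψw S [0] '' T2base S 1 (n-1) j) with heU
  set eB : ℝ × ℝ × Set ℝ :=
    (fm S 0 (fm S (n-1) (fm S 1 0)), fm S 0 1, Ψw S [0, n-1] '' T1base S 1 (n-1)) with heB
  have hlt01 : fm S 0 1 < fm S 1 0 := ntlt S h1n hnt0
  -- T2base normalized endpoints
  have hT2 : ∀ j, j + 1 < n → T2base S 1 (n-1) j
      = S.T ∩ Set.Icc (fm S j (fm S 1 0)) (fm S (j+1) (fm S 0 1)) := by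
    intro j hj
    have := T2base_eq hρ S (α := 1) (β := n-1) le_rfl (by omega) (by omega) hj
    rwa [hnb1, show (1:ℕ) - 1 = 0 from rfl] at this
  -- the aux chain over the U pieces ending with eB
  have degAux : ∀ c j, 1 ≤ j → j + c = n - 1 →
      ChainCov S (fm S 0 (fm S j (fm S 0 1))) ((List.range' j c).map eU ++ [eB])
        (fm S 0 1) := by
    intro c
    induction c with
    | zero =>
      intro j hj1 hjc
      have hj : j = n - 1 := by omega
      subst hj
      simp only [List.range'_zero, List.map_nil, List.nil_append]
      have hPT : fm S 0 (fm S (n-1) (fm S 1 0)) ∈ S.T :=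
        fmem S h0n (fmem S hn1n (fmem S h1n (zero_mem hρ S)))
      have hQT : fm S 0 1 ∈ S.T := fmem S h0n (one_mem hρ S)
      refine ⟨(fm01 hρ S h0n (fm01 hρ S hn1n (fm1_mem01 hρ S h0n))).1,
        fm_strict hρ S h0n (fm_strict hρ S hn1n hlt01), ?_, hPT, hQT, ?_, ?_, ?_⟩
      · exact junction_gapW hρ S (by simp [h0n, hn1n] : ∀ c ∈ [0, n-1], c < n) h1n
      · have : fm S (n-1) (fm S 1 0) ≤ fm S (n-1) 1 :=
          fm_le hρ S hn1n (fm0_mem01 hρ S h1n).2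
        rw [hr1] at this
        exact fm_le hρ S h0n this
      · have h := transIcc hρ S (w := [0, n-1]) (by simp [h0n, hn1n])
          (T1base_eq hρ S (by omega) hn1n) (fa0_mem_T1base hρ S (by omega))
          (fb1_mem_T1base hρ S (by omega)) (fm0_mem01 hρ S h1n).1 (fm1_mem01 hρ S hn1n).2
        have h2 : Ψw S [0, n-1] (fm S (n-1) 1) = fm S 0 (fm S (n-1) (fm S (n-1) 1)) := rfl
        rw [h2, hr1, hr1] at h
        exact h
      · exact ⟨rfl, (T_sub hρ S hQT).1, (T_sub hρ S hQT).2⟩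
    | succ c ih =>
      intro j hj1 hjc
      have hjn : j < n := by omega
      have hj1n : j + 1 < n := by omega
      have htj : S.touch j := hdegt j hj1 hj1n
      rw [List.range'_succ, List.map_cons, List.cons_append]
      have hPT : fm S 0 (fm S j (fm S 1 0)) ∈ S.T :=
        fmem S h0n (fmem S hjn (fmem S h1n (zero_mem hρ S)))
      have hQT : fm S 0 (fm S (j+1) (fm S 0 1)) ∈ S.T :=
        fmem S h0n (fmem S hj1n (fmem S h0n (one_mem hρ S)))
      refine ⟨(fm01 hρ S h0n (fm01 hρ S hjn (fm1_mem01 hρ S h0n))).1,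
        fm_strict hρ S h0n (fm_strict hρ S hjn hlt01), ?_, hPT, hQT, ?_, ?_, ?_⟩
      · exact junction_gapW hρ S (by simp [h0n, hjn] : ∀ c ∈ [0, j], c < n) h1n
      · calc fm S 0 (fm S j (fm S 1 0)) ≤ fm S 0 (fm S j 1) :=
              fm_le hρ S h0n (fm_le hρ S hjn (fm0_mem01 hρ S h1n).2)
          _ ≤ fm S 0 (fm S (j+1) 0) := fm_le hρ S h0n (S.order j hj1n)
          _ ≤ fm S 0 (fm S (j+1) (fm S 0 1)) :=
              fm_le hρ S h0n (fm_le hρ S hj1n (fm1_mem01 hρ S h0n).1)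
      · have hY := hT2 j hj1n
        have h := transIcc hρ S (w := [0]) (by simp [h0n]) hY
          (by rw [hY]
              refine ⟨fmem S hjn (fmem S h1n (zero_mem hρ S)), le_rfl, ?_⟩
              calc fm S j (fm S 1 0) ≤ fm S j 1 := fm_le hρ S hjn (fm0_mem01 hρ S h1n).2
                _ ≤ fm S (j+1) 0 := S.order j hj1n
                _ ≤ fm S (j+1) (fm S 0 1) := fm_le hρ S hj1n (fm1_mem01 hρ S h0n).1)
          (by rw [hY]
              refine ⟨fmem S hj1n (fmem S h0n (one_mem hρ S)), ?_, le_rfl⟩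
              calc fm S j (fm S 1 0) ≤ fm S j 1 := fm_le hρ S hjn (fm0_mem01 hρ S h1n).2
                _ ≤ fm S (j+1) 0 := S.order j hj1n
                _ ≤ fm S (j+1) (fm S 0 1) := fm_le hρ S hj1n (fm1_mem01 hρ S h0n).1)
          (fm01 hρ S hjn (fm0_mem01 hρ S h1n)).1 (fm01 hρ S hj1n (fm1_mem01 hρ S h0n)).2
        exact h
      · exact ih (j+1) (by omega) (by omega)
  -- full chain
  have hchain : ChainCov S (fm S 0 (fm S 0 1)) (eA :: ((List.range' 1 (n-2)).map eU ++ [eB]))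
      (fm S 0 1) := by
    have hPT : fm S 0 (fm S 1 0) ∈ S.T := fmem S h0n (fmem S h1n (zero_mem hρ S))
    have hQT : fm S 0 (fm S 1 (fm S 0 1)) ∈ S.T :=
      fmem S h0n (fmem S h1n (fmem S h0n (one_mem hρ S)))
    refine ⟨(fm01 hρ S h0n (fm1_mem01 hρ S h0n)).1,
      fm_strict hρ S h0n hlt01, ?_, hPT, hQT, ?_, ?_, ?_⟩
    · exact junction_gapW hρ S (by simp [h0n] : ∀ c ∈ [0], c < n) h1n
    · exact fm_le hρ S h0n (fm_le hρ S h1n (fm1_mem01 hρ S h0n).1)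
    · have h := transIcc hρ S (w := [0, 1]) (by simp [h0n, h1n])
        (T1base_eq hρ S le_rfl h0n) (fa0_mem_T1base hρ S le_rfl)
        (fb1_mem_T1base hρ S le_rfl) (fm0_mem01 hρ S h0n).1 (fm1_mem01 hρ S h0n).2
      have h2 : Ψw S [0, 1] (fm S 0 0) = fm S 0 (fm S 1 (fm S 0 0)) := rfl
      rw [h2, h00] at h
      exact h
    · exact degAux (n-2) 1 le_rfl (by omega)
  refine ⟨eA :: ((List.range' 1 (n-2)).map eU ++ [eB]), hchain, ?_, ?_⟩
  · simp only [List.length_cons, List.length_append, List.length_map, List.length_range']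
    omega
  · intro e he
    rcases List.mem_cons.mp he with rfl | he2
    · -- eA
      apply piece_T1 hρ S (w := [0, 1]) (by simp [h0n, h1n]) le_rfl h0n
        (fun i h1 h2 => absurd h2 (by omega)) (Or.inl rfl) (Or.inr hnt0)
        (x' := fm S 0 (fm S 0 1)) (y' := fm S 0 (fm S 1 (fm S 1 0)))
      · exact (fm01 hρ S h0n (fm1_mem01 hρ S h0n)).1
      · show fm S 0 (fm S 0 1) < fm S 0 (fm S 1 (fm S 0 0))
        rw [h00]
        exact fm_strict hρ S h0n hlt01
      · show S.T ∩ Set.Ioo (fm S 0 (fm S 0 1)) (fm S 0 (fm S 1 (fm S 0 0))) = ∅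
        rw [h00]
        exact junction_gapW hρ S (by simp [h0n] : ∀ c ∈ [0], c < n) h1n
      · show fm S 0 (fm S 1 (fm S 0 1)) < fm S 0 (fm S 1 (fm S 1 0))
        exact fm_strict hρ S h0n (fm_strict hρ S h1n hlt01)
      · exact (fm01 hρ S h0n (fm01 hρ S h1n (fm0_mem01 hρ S h1n))).2
      · exact junction_gapW hρ S (by simp [h0n, h1n] : ∀ c ∈ [0, 1], c < n) h1n
    rcases List.mem_append.mp he2 with hu | hb
    · obtain ⟨j, hjr, rfl⟩ := List.mem_map.mp hu
      have hjj := List.mem_range'_1.mp hjr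
      have htj : S.touch j := hdegt j hjj.1 (by omega)
      exact piece_T2 S (by simp [h0n] : ∀ c ∈ [0], c < n) htj
    · rw [List.mem_singleton.mp hb]
      apply piece_T1 hρ S (w := [0, n-1]) (by simp [h0n, hn1n]) (by omega) hn1n
        (fun i hi1 hi2 => hdegt i hi1 (by omega)) (Or.inr hnt0) (Or.inl rfl)
        (x' := fm S 0 (fm S (n-1) (fm S 0 1))) (y' := fm S 1 0)
      · exact (fm01 hρ S h0n (fm01 hρ S hn1n (fm1_mem01 hρ S h0n))).1
      · exact fm_strict hρ S h0n (fm_strict hρ S hn1n hlt01)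
      · exact junction_gapW hρ S (by simp [h0n, hn1n] : ∀ c ∈ [0, n-1], c < n) h1n
      · show fm S 0 (fm S (n-1) (fm S (n-1) 1)) < fm S 1 0
        rw [hr1, hr1]
        exact hlt01
      · exact (fm0_mem01 hρ S h1n).2
      · show S.T ∩ Set.Ioo (fm S 0 (fm S (n-1) (fm S (n-1) 1))) (fm S 1 0) = ∅
        rw [hr1, hr1]
        exact junction_gap hρ S h1n

end BaseD

end TstarAux
namespace TstarAux

variable {n : ℕ} {ρ : ℕ → ℝ}

/-- Stacking the per-level piece lists, deepest level first. -/
def stack (lvl : ℕ → List (ℝ × ℝ × Set ℝ)) (v : ℕ) : ℕ → List (ℝ × ℝ × Set ℝ)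
  | 0 => []
  | c+1 => stack lvl v c ++ lvl (v - c - 1)

section Assemble
variable (hρ : ContractionVec n ρ) (S : TouchingIFS n ρ) (α β : ℕ)
include hρ

lemma base_exists (hα : S.alphaRun α) (hβ : S.betaRun β) :
    ∃ L : List (ℝ × ℝ × Set ℝ),
      ChainCov S (fm S 0 (fm S (α-1) 1)) L (fm S (α-1) 1) ∧ 2 ≤ L.length ∧
      ∀ e ∈ L, Piece S α β e.2.2 := by
  by_cases hdeg : α = 1 ∧ ∀ i, 1 ≤ i → i + 1 < n → S.touch i
  · exact baseD_spec hρ S α β hα hβ hdeg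
  · apply baseND_spec hρ S α β hα hβ
    rcases Nat.lt_or_ge α 2 with h2 | h2
    · right
      have hα1 : α = 1 := by have := hα.1; omega
      rw [not_and] at hdeg
      have := hdeg hα1
      push_neg at this
      obtain ⟨i, hi1, hi2, hi3⟩ := this
      exact ⟨i, by omega, by omega, hi3⟩
    · exact Or.inl h2

lemma patchL_eq (hα1 : 1 ≤ α) (wi : List ℕ) (k : ℕ) :
    S.patchL α wi k = Ψw S (wi ++ List.replicate k 0) '' T1base S 0 (α-1) := by
  have hIcc : Finset.range α = Finset.Icc 0 (α-1) := by
    ext i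
    simp only [Finset.mem_range, Finset.mem_Icc]
    omega
  rw [TouchingIFS.patchL, hIcc]
  rw [T1base, Set.image_iUnion₂]
  apply Set.iUnion₂_congr
  intro j _
  rw [TouchingIFS.cyl, affWord_append, Set.image_comp]
  rfl

lemma rep0_fix : ∀ c : ℕ, Ψw S (List.replicate c 0) 0 = 0 := by
  intro c
  induction c with
  | zero => rfl
  | succ c ih =>
    rw [List.replicate_succ]
    show fm S 0 (Ψw S (List.replicate c 0) 0) = 0
    rw [ih]
    exact S.left0

lemma patchL_Icc (hα1 : 1 ≤ α) (hαn : α < n) (wi : List ℕ) (hwi : ∀ c ∈ wi, c < n)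
    (k : ℕ) :
    S.patchL α wi k = S.T ∩ Set.Icc (Ψw S (wi ++ List.replicate k 0) 0)
      (Ψw S (wi ++ List.replicate k 0) (fm S (α-1) 1)) := by
  have hp : ∀ c ∈ wi ++ List.replicate k 0, c < n := by
    intro c hc
    rcases List.mem_append.mp hc with h | h
    · exact hwi c h
    · rw [List.eq_of_mem_replicate h]; omega
  have h00 : fm S 0 0 = 0 := S.left0
  have hbase : T1base S 0 (α-1) = S.T ∩ Set.Icc 0 (fm S (α-1) 1) := by
    have := T1base_eq hρ S (by omega : (0:ℕ) ≤ α - 1) (by omega)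
    rwa [h00] at this
  have h0mem : (0:ℝ) ∈ T1base S 0 (α-1) := by
    have := fa0_mem_T1base hρ S (by omega : (0:ℕ) ≤ α - 1)
    rwa [h00] at this
  rw [patchL_eq hρ S α hα1 wi k]
  exact transIcc hρ S hp hbase h0mem (fb1_mem_T1base hρ S (by omega)) le_rfl
    (fm1_mem01 hρ S (by omega)).2

end Assemble

end TstarAux

open TstarAux

/-- from Lemma 3.4: `L_u(T_i) ∖ L_v(T_i)` is a finite (≥ 2) disjoint
union of sets from the classes `𝒯⁽¹⁾` and `𝒯⁽²⁾`, i.e. it belongs to `𝒯*`. -/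
theorem patchL_diff_mem_Tstar {n : ℕ} {ρ : ℕ → ℝ}
    (hρ : ContractionVec n ρ) (S : TouchingIFS n ρ)
    (α β : ℕ) (hα : S.alphaRun α) (hβ : S.betaRun β)
    (wi : List ℕ) (hwi : ∀ a ∈ wi, a < n)
    (u v : ℕ) (huv : u < v) :
    ∃ (m : ℕ) (F : Fin m → Set ℝ), 2 ≤ m ∧
      (∀ r, S.T1mem (F r) ∨ S.T2mem α β (F r)) ∧
      (∀ r s, r ≠ s → F r ∩ F s = ∅) ∧
      (⋃ r, F r) = S.patchL α wi u \ S.patchL α wi v := by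
  classical
  have hn3 := hρ.three_le
  have hα1 : 1 ≤ α := hα.1
  have hαn : α < n := hα.2.1
  set B₀ := fm S (α-1) 1 with hB₀
  obtain ⟨L, hL, hLlen, hLpc⟩ := base_exists hρ S α β hα hβ
  set pf : ℕ → List ℕ := fun k => wi ++ List.replicate k 0 with hpf
  have hpfk : ∀ k, pf k = wi ++ List.replicate k 0 := fun k => rfl
  have hpv : ∀ k, ∀ c ∈ pf k, c < n := by
    intro k c hc
    rcases List.mem_append.mp hc with h | h
    · exact hwi c h
    · rw [List.eq_of_mem_replicate h]; omega
  set lvl : ℕ → List (ℝ × ℝ × Set ℝ) := fun k =>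
    L.map (fun e => (Ψw S (pf k) e.1, Ψw S (pf k) e.2.1, Ψw S (pf k) '' e.2.2)) with hlvl
  have hlvlk : ∀ k, lvl k
      = L.map (fun e => (Ψw S (pf k) e.1, Ψw S (pf k) e.2.1, Ψw S (pf k) '' e.2.2)) :=
    fun k => rfl
  have hlink : ∀ k, Ψw S (pf (k+1)) B₀ = Ψw S (pf k) (fm S 0 B₀) := by
    intro k
    have h1 : pf (k+1) = pf k ++ [0] := by
      rw [hpfk, hpfk, List.replicate_succ', List.append_assoc]
    rw [h1, Ψw_append_apply]
    rfl
  have hstackchain : ∀ c, c ≤ v →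
      ChainCov S (Ψw S (pf v) B₀) (stack lvl v c) (Ψw S (pf (v - c)) B₀) := by
    intro c
    induction c with
    | zero =>
      intro _
      have h01 : Ψw S (pf v) B₀ ∈ Set.Icc (0:ℝ) 1 :=
        Ψw01 hρ S (hpv v) (fm1_mem01 hρ S (by omega))
      exact ⟨by rw [Nat.sub_zero], h01.1, h01.2⟩
    | succ c ih =>
      intro hc
      have h1 := ih (by omega)
      have h2 := cc_map hρ S (hpv (v - c - 1)) L _ _ hL
      rw [← hlink (v - c - 1)] at h2
      have he1 : v - c - 1 + 1 = v - c := by omega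
      rw [he1] at h2
      have he2 : v - (c+1) = v - c - 1 := by omega
      rw [he2]
      exact cc_append hρ S _ _ _ _ _ h1 h2
  have hglen : ∀ c, (stack lvl v c).length = c * L.length := by
    intro c
    induction c with
    | zero => simp [stack]
    | succ c ih =>
      simp only [stack, List.length_append, ih, hlvlk, List.length_map]
      ring
  have hgmem : ∀ c, ∀ e ∈ stack lvl v c, S.T1mem e.2.2 ∨ S.T2mem α β e.2.2 := by
    intro c
    induction c with
    | zero => intro e he; exact absurd he List.not_mem_nil
    | succ c ih =>
      intro e he
      rcases List.mem_append.mp he with h | h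
      · exact ih e h
      · rw [hlvlk] at h
        obtain ⟨e₀, he₀, rfl⟩ := List.mem_map.mp h
        exact hLpc e₀ he₀ (pf (v - c - 1)) (hpv _)
  set G := stack lvl v (v - u) with hG
  have hchain : ChainCov S (Ψw S (pf v) B₀) G (Ψw S (pf u) B₀) := by
    have := hstackchain (v - u) (by omega)
    rwa [show v - (v - u) = u by omega] at this
  have htarget : S.patchL α wi u \ S.patchL α wi v
      = S.T ∩ Set.Ioc (Ψw S (pf v) B₀) (Ψw S (pf u) B₀) := by
    rw [patchL_Icc hρ S α hα1 hαn wi hwi u, patchL_Icc hρ S α hα1 hαn wi hwi v,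
      ← hpfk u, ← hpfk v]
    have hc0 : Ψw S (pf v) 0 = Ψw S (pf u) 0 := by
      have hsplit : pf v = pf u ++ List.replicate (v - u) 0 := by
        rw [hpfk, hpfk, List.append_assoc, ← List.replicate_add,
          show u + (v - u) = v by omega]
      rw [hsplit, Ψw_append_apply, rep0_fix hρ S]
    have hA0 : Ψw S (pf u) 0 ≤ Ψw S (pf v) B₀ := by
      rw [← hc0]
      exact Ψw_mono hρ S (hpv v) (fm1_mem01 hρ S (by omega)).1
    have hAB : Ψw S (pf v) B₀ ≤ Ψw S (pf u) B₀ := (cc_le hρ S G _ _ hchain).1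
    ext z
    simp only [Set.mem_diff, Set.mem_inter_iff, Set.mem_Icc, Set.mem_Ioc]
    constructor
    · rintro ⟨⟨hzT, h1, h2⟩, hnot⟩
      refine ⟨hzT, ?_, h2⟩
      by_contra hcon
      push_neg at hcon
      refine hnot ⟨hzT, ?_, hcon⟩
      rw [hc0]; exact h1
    · rintro ⟨hzT, h1, h2⟩
      refine ⟨⟨hzT, le_trans hA0 (le_of_lt h1), h2⟩, ?_⟩
      rintro ⟨-, -, h4⟩
      linarith
  refine ⟨G.length, fun r => (G.get r).2.2, ?_, ?_, ?_, ?_⟩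
  · rw [hG, hglen]
    calc 2 = 1 * 2 := by ring
      _ ≤ (v - u) * L.length := Nat.mul_le_mul (by omega) hLlen
  · intro r
    have hgmemG : ∀ e ∈ G, S.T1mem e.2.2 ∨ S.T2mem α β e.2.2 := by
      rw [hG]; exact hgmem (v - u)
    exact hgmemG _ (List.get_mem G r)
  · intro r s hrs
    have hpw := cc_pairwise hρ S G _ _ hchain
    rcases lt_or_gt_of_ne hrs with h | h
    · exact List.pairwise_iff_get.mp hpw r s h
    · rw [Set.inter_comm]
      exact List.pairwise_iff_get.mp hpw s r h
  · rw [htarget]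
    ext z
    simp only [Set.mem_iUnion]
    constructor
    · rintro ⟨r, hr⟩
      exact cc_subset hρ S G _ _ hchain _ (G.get_mem r) hr
    · intro hz
      obtain ⟨e, heG, hze⟩ := cc_cover hρ S G _ _ hchain z hz.1 hz.2.1 hz.2.2
      obtain ⟨r, hr⟩ := List.mem_iff_get.mp heG
      exact ⟨r, by rw [hr]; exact hze⟩
end
end

section
/- Let i be a left substitutable touching letter with witnesses j_i, k_i, k_i' (so diam L_{k_i}(T_{i+1}) = diam L_{k_i'}(T_{i j_i})), and let p,q ∈ ℤ⁺ satisfy ρ₁^p = ρₙ^q and p,q > k_i' + |j_i|. Define T^{(4)}_i = R_q(T_i) ∪ L_{k_i}(T_{i+1}) and D^{(4)}_i = L_{k_i'}(D_{i j_i}) ∪ R_q(D_i). Then Ψ_{i[n]^{2q}} ∘ Ψ_i^{−1}(T^{(4)}_i) = R_{3q}(T_i) ∪ L_{2p+k_i}(T_{i+1}) and Φ_{i[n]^{2q}} ∘ Φ_i^{−1}(D^{(4)}_i) = L_{k_i'}(D_{i[n]^{2q} j_i}) ∪ R_{3q}(D_i). -/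
noncomputable section

open Set Metric MeasureTheory

variable {n : ℕ} {ρ : ℕ → ℝ}

lemma affWord_apply_cons (r t : ℕ → ℝ) (i : ℕ) (w : List ℕ) (x : ℝ) :
    affWord r t (i :: w) x = r i * affWord r t w x + t i := rfl

lemma affWord_append_apply (r t : ℕ → ℝ) (w v : List ℕ) (x : ℝ) :
    affWord r t (w ++ v) x = affWord r t w (affWord r t v x) := by
  induction w with
  | nil => rfl
  | cons i w ih => simp [affWord_apply_cons, ih]

lemma affWord_rep_zero (r t : ℕ → ℝ) (h0 : r 0 * 0 + t 0 = 0) (m : ℕ) (x : ℝ) :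
    affWord r t (List.replicate m 0) x = r 0 ^ m * x := by
  induction m with
  | zero => simp [affWord]
  | succ m ih =>
    rw [List.replicate_succ, affWord_apply_cons, ih]
    have : t 0 = 0 := by linarith
    rw [this]; ring

lemma affWord_rep_top (r t : ℕ → ℝ) (N : ℕ) (h1 : r N * 1 + t N = 1) (k : ℕ) (x : ℝ) :
    affWord r t (List.replicate k N) x = 1 - r N ^ k * (1 - x) := by
  induction k with
  | zero => simp [affWord]
  | succ k ih =>
    rw [List.replicate_succ, affWord_apply_cons, ih]
    have : t N = 1 - r N := by linarith
    rw [this]; ring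

lemma shift_comp (r t : ℕ → ℝ) (i : ℕ) (hri : r i ≠ 0) (w v : List ℕ) :
    (fun x => affWord r t (i :: w) ((x - t i) / r i)) ∘ affWord r t (i :: v)
      = affWord r t (i :: (w ++ v)) := by
  funext x
  simp only [Function.comp_apply, affWord_apply_cons, affWord_append_apply]
  have : (r i * affWord r t v x + t i - t i) / r i = affWord r t v x := by
    field_simp
    ring
  rw [this]

lemma touch_shift (r t : ℕ → ℝ) (n i p q m : ℕ)
    (hri : r i ≠ 0) (h0 : r 0 * 0 + t 0 = 0) (h1 : r (n - 1) * 1 + t (n - 1) = 1)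
    (htouch : r i * 1 + t i = r (i + 1) * 0 + t (i + 1))
    (hpq : r 0 ^ p = r (n - 1) ^ q) (u : List ℕ) :
    (fun x => affWord r t (i :: List.replicate (2 * q) (n - 1)) ((x - t i) / r i)) ∘
      affWord r t ((i + 1) :: (List.replicate m 0 ++ u))
      = affWord r t ((i + 1) :: (List.replicate (2 * p + m) 0 ++ u)) := by
  funext x
  simp only [Function.comp_apply, affWord_apply_cons, affWord_append_apply,
    affWord_rep_zero r t h0, affWord_rep_top r t (n - 1) h1]
  have ht : t i = t (i + 1) - r i := by linarith
  have hpow : r 0 ^ (2 * p) = r (n - 1) ^ (2 * q) := by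
    rw [two_mul, two_mul, pow_add, pow_add, hpq]
  rw [ht, pow_add, ← hpow]
  set A := affWord r t u x
  field_simp
  ring

/-- Lemma 3.7: for a left substitutable touching letter `i` with
witnesses `j_i, k_i, k_i'`, and `p, q` with `ρ₁^p = ρₙ^q`, `p, q > k_i' + |j_i|`,
the maps `Ψ_{i[n]^{2q}} ∘ Ψ_i⁻¹` and `Φ_{i[n]^{2q}} ∘ Φ_i⁻¹` carry
`T⁽⁴⁾ᵢ = R_q(T_i) ∪ L_{k_i}(T_{i+1})` and `D⁽⁴⁾ᵢ = L_{k_i'}(D_{i j_i}) ∪ R_q(D_i)`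
onto `R_{3q}(T_i) ∪ L_{2p+k_i}(T_{i+1})` and
`L_{k_i'}(D_{i[n]^{2q} j_i}) ∪ R_{3q}(D_i)` respectively. -/
theorem shift_of_T4_D4 {n : ℕ} {ρ : ℕ → ℝ}
    (hρ : ContractionVec n ρ) (S : TouchingIFS n ρ) (Q : DustIFS n ρ)
    (α β : ℕ) (hα : S.alphaRun α) (hβ : S.betaRun β)
    (i : ℕ) (hi : S.touch i)
    (jw : List ℕ) (a : ℕ) (ki ki' : ℕ)
    (hjin : ∀ b ∈ jw ++ [a], b < n)
    (hwit : ρ (i + 1) * ρ 0 ^ ki = ρ i * ρ 0 ^ ki' * ((jw ++ [a]).map ρ).prod)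
    (ha0 : a ≠ 0) (hatouch : ∀ ℓ, S.touch ℓ → a ≠ ℓ + 1)
    (p q : ℕ) (hp : 1 ≤ p) (hq : 1 ≤ q)
    (hpq : ρ 0 ^ p = ρ (n - 1) ^ q)
    (hpbig : ki' + (jw ++ [a]).length < p) (hqbig : ki' + (jw ++ [a]).length < q) :
    ((fun x => affWord ρ S.t (i :: List.replicate (2 * q) (n - 1)) ((x - S.t i) / ρ i)) ''
        (S.patchR β [i] q ∪ S.patchL α [i + 1] ki) =
      S.patchR β [i] (3 * q) ∪ S.patchL α [i + 1] (2 * p + ki)) ∧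
    ((fun x => affWord ρ Q.d (i :: List.replicate (2 * q) (n - 1)) ((x - Q.d i) / ρ i)) ''
        (Q.patchL α (i :: (jw ++ [a])) ki' ∪ Q.patchR β [i] q) =
      Q.patchL α (i :: (List.replicate (2 * q) (n - 1) ++ (jw ++ [a]))) ki' ∪
        Q.patchR β [i] (3 * q)) := by
  have hin : i < n := by have := hi.1; omega
  have hri : ρ i ≠ 0 := ne_of_gt (hρ.pos i hin)
  have htouch : ρ i * 1 + S.t i = ρ (i + 1) * 0 + S.t (i + 1) := hi.2
  have h0 : ρ 0 * 0 + S.t 0 = 0 := S.left0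
  have h1 : ρ (n - 1) * 1 + S.t (n - 1) = 1 := S.right1
  have h0d : ρ 0 * 0 + Q.d 0 = 0 := Q.left0
  have h1d : ρ (n - 1) * 1 + Q.d (n - 1) = 1 := Q.right1
  have h3q : 3 * q = 2 * q + q := by ring
  constructor
  · set f := fun x => affWord ρ S.t (i :: List.replicate (2 * q) (n - 1)) ((x - S.t i) / ρ i)
      with hf
    have key : ∀ v : List ℕ,
        f '' S.cyl (i :: v) = S.cyl (i :: (List.replicate (2 * q) (n - 1) ++ v)) := by
      intro v
      unfold TouchingIFS.cyl
      rw [← Set.image_comp, hf, shift_comp ρ S.t i hri]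
    rw [Set.image_union]
    congr 1
    · unfold TouchingIFS.patchR
      rw [Set.image_iUnion₂]
      refine Set.iUnion₂_congr fun j hj => ?_
      have e1 : ([i] ++ List.replicate q (n - 1) ++ [j])
          = i :: (List.replicate q (n - 1) ++ [j]) := by simp
      rw [e1, key]
      have e3 : i :: (List.replicate (2 * q) (n - 1) ++ (List.replicate q (n - 1) ++ [j]))
          = [i] ++ List.replicate (3 * q) (n - 1) ++ [j] := by
        simp only [h3q, List.replicate_add, List.singleton_append, List.cons_append, List.append_assoc, List.nil_append]
      rw [e3]
    · unfold TouchingIFS.patchL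
      rw [Set.image_iUnion₂]
      refine Set.iUnion₂_congr fun j hj => ?_
      have e1 : ([i + 1] ++ List.replicate ki 0 ++ [j])
          = (i + 1) :: (List.replicate ki 0 ++ [j]) := by simp
      have e2 : ([i + 1] ++ List.replicate (2 * p + ki) 0 ++ [j])
          = (i + 1) :: (List.replicate (2 * p + ki) 0 ++ [j]) := by simp
      rw [e1, e2]
      unfold TouchingIFS.cyl
      rw [← Set.image_comp, hf,
        touch_shift ρ S.t n i p q ki hri h0 h1 htouch hpq [j]]
  · set f := fun x => affWord ρ Q.d (i :: List.replicate (2 * q) (n - 1)) ((x - Q.d i) / ρ i)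
      with hf
    have key : ∀ v : List ℕ,
        f '' Q.cyl (i :: v) = Q.cyl (i :: (List.replicate (2 * q) (n - 1) ++ v)) := by
      intro v
      unfold DustIFS.cyl
      rw [← Set.image_comp, hf, shift_comp ρ Q.d i hri]
    rw [Set.image_union]
    congr 1
    · unfold DustIFS.patchL
      rw [Set.image_iUnion₂]
      refine Set.iUnion₂_congr fun j hj => ?_
      have e1 : (i :: (jw ++ [a]) ++ List.replicate ki' 0 ++ [j])
          = i :: ((jw ++ [a]) ++ (List.replicate ki' 0 ++ [j])) := by
        simp [List.append_assoc]
      rw [e1, key]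
      have e3 : i :: (List.replicate (2 * q) (n - 1) ++ ((jw ++ [a]) ++ (List.replicate ki' 0 ++ [j])))
          = i :: (List.replicate (2 * q) (n - 1) ++ (jw ++ [a])) ++ List.replicate ki' 0 ++ [j] := by
        simp only [List.cons_append, List.append_assoc]
      rw [e3]
    · unfold DustIFS.patchR
      rw [Set.image_iUnion₂]
      refine Set.iUnion₂_congr fun j hj => ?_
      have e1 : ([i] ++ List.replicate q (n - 1) ++ [j])
          = i :: (List.replicate q (n - 1) ++ [j]) := by simp
      rw [e1, key]
      have e3 : i :: (List.replicate (2 * q) (n - 1) ++ (List.replicate q (n - 1) ++ [j]))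
          = [i] ++ List.replicate (3 * q) (n - 1) ++ [j] := by
        simp only [h3q, List.replicate_add, List.singleton_append, List.cons_append, List.append_assoc, List.nil_append]
      rw [e3]
end
end
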